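/- arXiv:1604.01238 — 4 statements merged into one kernel-verified Lean document; each statement's English description precedes it below -/
import Mathlib

section
/- Let T be a (1,2)-tensor on a finite-dimensional real vector space V (dim V = n ≥ 2) that is symmetric in its two lower arguments, i.e., T(u,v) = T(v,u). If for every vector v ∈ V the vector T(v,v) is proportional to v, then there exists a linear functional φ on V such that T(u,v) = φ(v) u + φ(u) v for all u, v ∈ V; in index notation, T^i_{jk} = φ_k δ^i_j + φ_j δ^i_k. -/
/-- Let `T` be a `(1,2)`-tensor on a finite-dimensional real vector space `V`
(`dim V = n ≥ 2`) that is symmetric in its two lower arguments. If for every vector `v ∈ V` the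
vector `T(v,v)` is proportional to `v`, then there exists a linear functional `φ` on `V` such
that `T(u,v) = φ(v) u + φ(u) v` for all `u, v ∈ V`. -/
theorem statement_1 (V : Type*) [AddCommGroup V] [Module ℝ V] [FiniteDimensional ℝ V]
    (hn : 2 ≤ Module.finrank ℝ V)
    (T : V →ₗ[ℝ] V →ₗ[ℝ] V)
    (hsymm : ∀ u v : V, T u v = T v u)
    (hprop : ∀ v : V, ∃ c : ℝ, T v v = c • v) :
    ∃ φ : V →ₗ[ℝ] ℝ, ∀ u v : V, T u v = φ v • u + φ u • v := by
  classical
  obtain ⟨c0, hc0⟩ := Classical.axiomOfChoice hprop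
  set c : V → ℝ := fun v => if v = 0 then 0 else c0 v with hcdef
  have hc : ∀ v, T v v = c v • v := by
    intro v
    by_cases h : v = 0
    · simp [hcdef, h]
    · simpa [hcdef, h] using hc0 v
  have hc0' : c 0 = 0 := by simp [hcdef]
  -- homogeneity
  have hsmul : ∀ (a : ℝ) (v : V), c (a • v) = a * c v := by
    intro a v
    by_cases hv : v = 0
    · simp [hv, hc0']
    by_cases ha : a = 0
    · simp [ha, hc0']
    have h1 : T (a • v) (a • v) = (a * a * c v) • v := by
      simp only [map_smul, LinearMap.smul_apply, hc v, smul_smul]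
      module
    have h2 : T (a • v) (a • v) = (c (a • v) * a) • v := by
      rw [hc (a • v), smul_smul]
    have h3 := h1.symm.trans h2
    have hco : c (a • v) * a = a * a * c v := by
      by_contra hne
      have h4 := sub_eq_zero.2 h3
      rw [← sub_smul] at h4
      rcases smul_eq_zero.1 h4 with h | h
      · exact hne (by linarith [sub_eq_zero.1 h])
      · exact hv h
    have : c (a • v) * a = (a * c v) * a := by rw [hco]; ring
    exact mul_right_cancel₀ ha this
  -- expansion of T u v for all u v
  have hexp : ∀ u v : V, (2:ℝ) • T u v = (c (u+v) - c u) • u + (c (u+v) - c v) • v := by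
    intro u v
    have h1 : c (u+v) • (u+v) = c u • u + (2:ℝ) • T u v + c v • v := by
      rw [← hc (u+v), ← hc u, ← hc v]
      simp only [map_add, LinearMap.add_apply, hsymm v u]
      module
    linear_combination (norm := module) -h1
  have hexp' : ∀ u v : V, (2:ℝ) • T u v = (c u - c (u-v)) • u + (c v + c (u-v)) • v := by
    intro u v
    have h1 : c (u-v) • (u-v) = c u • u - (2:ℝ) • T u v + c v • v := by
      rw [← hc (u-v), ← hc u, ← hc v]
      simp only [map_sub, LinearMap.sub_apply, hsymm v u]
      module
    linear_combination (norm := module) h1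
  -- additivity for independent pairs
  have hpair : ∀ u v : V, LinearIndependent ℝ ![u, v] → c (u+v) = c u + c v := by
    intro u v hind
    have h := (hexp u v).symm.trans (hexp' u v)
    have hz : (c (u+v) - c u - (c u - c (u-v))) • u
        + (c (u+v) - c v - (c v + c (u-v))) • v = 0 := by
      linear_combination (norm := module) h
    obtain ⟨h1, h2⟩ := (LinearIndependent.pair_iff.1 hind) _ _ hz
    linarith
  -- additivity in general
  have hadd : ∀ u v : V, c (u+v) = c u + c v := by
    intro u v
    by_cases hind : LinearIndependent ℝ ![u, v]
    · exact hpair u v hind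
    · rw [linearIndependent_fin2] at hind
      push_neg at hind
      simp only [Matrix.cons_val_one, Matrix.head_cons, Matrix.cons_val_zero] at hind
      by_cases hv : v = 0
      · simp [hv, hc0']
      · obtain ⟨a, ha⟩ := hind hv
        rw [← ha, show a • v + v = (a+1) • v by module, hsmul, hsmul]
        ring
  refine ⟨{ toFun := fun v => c v / 2,
            map_add' := fun u v => by rw [hadd]; ring,
            map_smul' := fun a v => by simp only [hsmul, RingHom.id_apply, smul_eq_mul]; ring }, ?_⟩
  intro u v
  simp only [LinearMap.coe_mk, AddHom.coe_mk]
  have key : (2:ℝ) • T u v = c v • u + c u • v := by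
    by_cases hind : LinearIndependent ℝ ![u, v]
    · rw [hexp u v, hadd u v]
      match_scalars <;> ring
    · rw [linearIndependent_fin2] at hind
      push_neg at hind
      simp only [Matrix.cons_val_one, Matrix.head_cons, Matrix.cons_val_zero] at hind
      by_cases hv : v = 0
      · simp [hv, hc0']
      · obtain ⟨a, ha⟩ := hind hv
        rw [← ha]
        simp only [map_smul, LinearMap.smul_apply, hc v, hsmul]
        match_scalars <;> ring
  have h2 : T u v = ((2:ℝ)⁻¹ * 2) • T u v := by norm_num
  rw [h2, mul_smul, key]
  match_scalars <;> ring
end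

section
/- Let M be an oriented n-dimensional manifold and let ∇ and ∇̄ be projectively equivalent torsion-free affine connections on M. Then for every 1-form K of projective weight −2 (i.e., every section of T^{(0,1)}M ⊗ (Λ_n)^{−2/(n+1)}M), the symmetrizations of the covariant derivatives agree: (∇̄_X K)(Y) + (∇̄_Y K)(X) = (∇_X K)(Y) + (∇_Y K)(X) for all vector fields X, Y. In other words, the differential operator K ↦ Symmetrization(∇K), in indices K_i ↦ K_{i,j} + K_{j,i}, does not depend on the choice of connection within the projective class. -/
open scoped ContDiff

noncomputable section

namespace ProjGeo

/-- The partial derivative of a function on `ℝⁿ` in the `j`-th coordinate direction. -/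
def pd {n : ℕ} (j : Fin n) (f : (Fin n → ℝ) → ℝ) (p : Fin n → ℝ) : ℝ :=
  fderiv ℝ f p (Pi.single j 1)

/-- Christoffel symbols in coordinates: `Γ p i j k` represents `Γ^i_{jk}` at the point `p`. -/
abbrev Christoffel (n : ℕ) := (Fin n → ℝ) → Fin n → Fin n → Fin n → ℝ

/-- A connection is torsion-free (symmetric) if `Γ^i_{jk} = Γ^i_{kj}`. -/
def TorsionFree {n : ℕ} (Γ : Christoffel n) : Prop :=
  ∀ p i j k, Γ p i j k = Γ p i k j

/-- Smoothness of the Christoffel symbols on the open set `U`. -/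
def SmoothChristoffelOn {n : ℕ} (U : Set (Fin n → ℝ)) (Γ : Christoffel n) : Prop :=
  ∀ i j k, ContDiffOn ℝ ∞ (fun p => Γ p i j k) U

/-- `γ` is a (parameterized) geodesic of the connection `Γ` on the parameter set `I`,
staying inside `U`: it is smooth and satisfies `γ̈^i + Γ^i_{jk} γ̇^j γ̇^k = 0`. -/
def IsGeodesicOn {n : ℕ} (U : Set (Fin n → ℝ)) (Γ : Christoffel n)
    (γ : ℝ → Fin n → ℝ) (I : Set ℝ) : Prop :=
  (∀ t ∈ I, γ t ∈ U) ∧ (∀ i, ContDiffOn ℝ ∞ (fun t => γ t i) I) ∧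
  ∀ t ∈ I, ∀ i,
    deriv (fun s => deriv (fun u => γ u i) s) t
      + ∑ j, ∑ k, Γ (γ t) i j k * deriv (fun u => γ u j) t * deriv (fun u => γ u k) t = 0

/-- `h` is a smooth regular reparameterisation defined on `J` and mapping `J` bijectively
onto `I`. -/
def IsReparam (I J : Set ℝ) (h : ℝ → ℝ) : Prop :=
  ContDiffOn ℝ ∞ h J ∧ (∀ t ∈ J, deriv h t ≠ 0) ∧ Set.BijOn h J I

/-- Two connections are projectively equivalent on `U`: each geodesic of the one is, after a
suitable reparameterisation, a geodesic of the other, and vice versa. -/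
def ProjEquivOn {n : ℕ} (U : Set (Fin n → ℝ)) (Γ Γ' : Christoffel n) : Prop :=
  (∀ γ I, IsOpen I → IsGeodesicOn U Γ γ I →
    ∃ h J, IsOpen J ∧ IsReparam I J h ∧ IsGeodesicOn U Γ' (fun t => γ (h t)) J) ∧
  (∀ γ I, IsOpen I → IsGeodesicOn U Γ' γ I →
    ∃ h J, IsOpen J ∧ IsReparam I J h ∧ IsGeodesicOn U Γ (fun t => γ (h t)) J)

/-- `Γ'` is obtained from `Γ` by the projective change associated with the 1-form `φ`:
`Γ'^i_{jk} = Γ^i_{jk} + φ_k δ^i_j + φ_j δ^i_k` on `U`. -/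
def ProjChange {n : ℕ} (Γ Γ' : Christoffel n) (φ : (Fin n → ℝ) → Fin n → ℝ)
    (U : Set (Fin n → ℝ)) : Prop :=
  ∀ p ∈ U, ∀ i j k, Γ' p i j k =
    Γ p i j k + (if i = j then φ p k else 0) + (if i = k then φ p j else 0)

end ProjGeo

namespace ProjGeo


-- ### Auxiliary algebra lemmas


lemma quad_eval2 {n : ℕ} (A : Fin n → Fin n → ℝ) {i j : Fin n} (hij : i ≠ j) (a b : ℝ) :
    (∑ m, ∑ k, A m k * ((if m = i then a else 0) + (if m = j then b else 0))
        * ((if k = i then a else 0) + (if k = j then b else 0)))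
      = a * a * A i i + a * b * A i j + b * a * A j i + b * b * A j j := by
  simp only [mul_add, add_mul, mul_ite, ite_mul, mul_zero, zero_mul, Finset.sum_add_distrib,
    Finset.sum_ite_eq', Finset.mem_univ, if_true]
  ring

lemma quad_eval1 {n : ℕ} (A : Fin n → Fin n → ℝ) (i : Fin n) :
    (∑ m, ∑ k, A m k * (if m = i then (1:ℝ) else 0) * (if k = i then (1:ℝ) else 0)) = A i i := by
  simp only [mul_ite, ite_mul, mul_zero, zero_mul, mul_one, one_mul,
    Finset.sum_ite_eq', Finset.mem_univ, if_true]

/-- If a symmetric bilinear vector-valued form satisfies `A(v,v) ∥ v` for all `v`,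
then `A^s_{ij} = δ^s_i φ_j + δ^s_j φ_i`. -/
lemma delta_form {n : ℕ} (A : Fin n → Fin n → Fin n → ℝ)
    (hsymm : ∀ s i j, A s i j = A s j i)
    (hq : ∀ v : Fin n → ℝ, ∃ c : ℝ, ∀ s, ∑ j, ∑ k, A s j k * v j * v k = c * v s) :
    ∃ φ : Fin n → ℝ, ∀ s i j,
      A s i j = (if s = i then φ j else 0) + (if s = j then φ i else 0) := by
  refine ⟨fun i => A i i i / 2, ?_⟩
  -- diagonal facts
  have hdiag : ∀ i s, s ≠ i → A s i i = 0 := by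
    intro i s hsi
    obtain ⟨c, hc⟩ := hq (fun m => if m = i then (1:ℝ) else 0)
    have := hc s
    rw [quad_eval1] at this
    simpa [hsi] using this
  have key : ∀ i j : Fin n, i ≠ j →
      (∀ s, s ≠ i → s ≠ j → A s i j = 0) ∧ A i i j = A j j j / 2 ∧ A j i j = A i i i / 2 := by
    intro i j hij
    -- v = e_i + e_j
    obtain ⟨c, hc⟩ := hq (fun m => (if m = i then (1:ℝ) else 0) + (if m = j then (1:ℝ) else 0))
    -- v = e_i + 2 e_j
    obtain ⟨c', hc'⟩ := hq (fun m => (if m = i then (1:ℝ) else 0) + (if m = j then (2:ℝ) else 0))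
    have off : ∀ s, s ≠ i → s ≠ j → A s i j = 0 := by
      intro s hsi hsj
      have := hc s
      rw [quad_eval2 (A s) hij] at this
      have h2 := hsymm s i j
      simp [hdiag i s hsi, hdiag j s hsj, hsi, hsj, ← h2] at this
      linarith
    refine ⟨off, ?_, ?_⟩
    · have e1 := hc i
      have e2 := hc j
      have e3 := hc' i
      have e4 := hc' j
      rw [quad_eval2 (A i) hij] at e1 e3
      rw [quad_eval2 (A j) hij] at e2 e4
      simp [hij, hij.symm, hdiag j i hij, hdiag i j hij.symm, ← hsymm i i j, ← hsymm j i j] at e1 e2 e3 e4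
      linarith
    · have e1 := hc i
      have e2 := hc j
      have e3 := hc' i
      have e4 := hc' j
      rw [quad_eval2 (A i) hij] at e1 e3
      rw [quad_eval2 (A j) hij] at e2 e4
      simp [hij, hij.symm, hdiag j i hij, hdiag i j hij.symm, ← hsymm i i j, ← hsymm j i j] at e1 e2 e3 e4
      linarith
  intro s i j
  by_cases hij : i = j
  · subst hij
    by_cases hsi : s = i
    · subst hsi
      simp
    · simp [hsi, hdiag i s hsi]
  · by_cases hsi : s = i
    · subst hsi
      simp [hij, (key s j hij).2.1]
    · by_cases hsj : s = j
      · subst hsj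
        have := (key i s hij).2.2
        simp [hsi, this]
      · simp [hsi, hsj, (key i j hij).1 s hsi hsj]


-- ### Geodesic construction
/-- The geodesic vector field on phase space. -/
def geoF {n : ℕ} (Γ : Christoffel n) (z : (Fin n → ℝ) × (Fin n → ℝ)) :
    (Fin n → ℝ) × (Fin n → ℝ) :=
  (z.2, fun i => -∑ j, ∑ k, Γ z.1 i j k * z.2 j * z.2 k)

lemma geoF_smooth {n : ℕ} {U : Set (Fin n → ℝ)} {Γ : Christoffel n}
    (hsm : SmoothChristoffelOn U Γ) :
    ContDiffOn ℝ ∞ (geoF Γ) (U ×ˢ (Set.univ : Set (Fin n → ℝ))) := by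
  apply ContDiffOn.prodMk
  · exact contDiff_snd.contDiffOn
  · apply contDiffOn_pi.2
    intro i
    apply ContDiffOn.neg
    apply ContDiffOn.sum; intro j _
    apply ContDiffOn.sum; intro k _
    have h1 : ContDiffOn ℝ ∞ (fun z : (Fin n → ℝ) × (Fin n → ℝ) => Γ z.1 i j k)
        (U ×ˢ (Set.univ : Set (Fin n → ℝ))) := by
      exact (hsm i j k).comp contDiff_fst.contDiffOn
        (fun z hz => hz.1)
    have h2 : ∀ m : Fin n, ContDiffOn ℝ ∞ (fun z : (Fin n → ℝ) × (Fin n → ℝ) => z.2 m)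
        (U ×ˢ (Set.univ : Set (Fin n → ℝ))) :=
      fun m => ((contDiff_pi.mp contDiff_snd) m).contDiffOn
    exact (h1.mul (h2 j)).mul (h2 k)

theorem exists_geodesic {n : ℕ} {U : Set (Fin n → ℝ)} (hU : IsOpen U)
    {Γ : Christoffel n} (hsm : SmoothChristoffelOn U Γ)
    {p : Fin n → ℝ} (hp : p ∈ U) (v : Fin n → ℝ) :
    ∃ (γ : ℝ → Fin n → ℝ) (ε : ℝ), 0 < ε ∧ γ 0 = p ∧
      (∀ i, deriv (fun t => γ t i) 0 = v i) ∧
      IsGeodesicOn U Γ γ (Set.Ioo (-ε) ε) := by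
  classical
  set V := U ×ˢ (Set.univ : Set (Fin n → ℝ)) with hV
  have hVopen : IsOpen V := hU.prod isOpen_univ
  have hmemV : ((p, v) : (Fin n → ℝ) × (Fin n → ℝ)) ∈ V := ⟨hp, trivial⟩
  have hFat : ContDiffAt ℝ 1 (geoF Γ) (p, v) :=
    ((geoF_smooth hsm).contDiffAt (hVopen.mem_nhds hmemV)).of_le (by exact_mod_cast le_top)
  obtain ⟨f, hf0, ε₀, hε₀, hode⟩ := hFat.exists_forall_mem_closedBall_exists_eq_forall_mem_Ioo_hasDerivAt₀ 0
  have h0mem : (0:ℝ) ∈ Set.Ioo (0 - ε₀) (0 + ε₀) := by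
    constructor <;> simp [hε₀]
  have hcont0 : ContinuousAt f 0 := (hode 0 h0mem).continuousAt
  have hnhds : {t : ℝ | f t ∈ V} ∈ nhds (0:ℝ) := by
    have := hcont0.preimage_mem_nhds (hVopen.mem_nhds (hf0 ▸ hmemV))
    exact this
  have hnhds2 : Set.Ioo (0 - ε₀) (0 + ε₀) ∈ nhds (0:ℝ) :=
    Ioo_mem_nhds (by linarith) (by linarith)
  obtain ⟨ε, hε, hball⟩ := Metric.mem_nhds_iff.mp (Filter.inter_mem hnhds hnhds2)
  rw [Real.ball_eq_Ioo] at hball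
  set I := Set.Ioo (-ε) ε with hIdef
  have hIopen : IsOpen I := isOpen_Ioo
  have hball' : ∀ t ∈ I, f t ∈ V ∧ t ∈ Set.Ioo (0 - ε₀) (0 + ε₀) := by
    intro t ht
    exact hball (by simpa [hIdef, zero_sub, zero_add] using ht)
  have hder : ∀ t ∈ I, HasDerivAt f (geoF Γ (f t)) t := fun t ht => hode t (hball' t ht).2
  have hmem : ∀ t ∈ I, f t ∈ V := fun t ht => (hball' t ht).1
  have h0I : (0:ℝ) ∈ I := ⟨by linarith, hε⟩
  -- smoothness bootstrap
  have hsmoothN : ∀ m : ℕ, ContDiffOn ℝ m f I := by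
    intro m
    induction m with
    | zero => exact contDiffOn_zero.mpr (fun t ht => (hder t ht).continuousAt.continuousWithinAt)
    | succ m ih =>
      have hcast : ((m + 1 : ℕ) : WithTop ℕ∞) = (m : WithTop ℕ∞) + 1 := by
        push_cast; rfl
      rw [hcast, contDiffOn_succ_iff_deriv_of_isOpen hIopen]
      refine ⟨fun t ht => (hder t ht).differentiableAt.differentiableWithinAt, ?_, ?_⟩
      · intro h; exact absurd h (by simp)
      · have hcomp : ContDiffOn ℝ m (fun t => geoF Γ (f t)) I :=
          ((geoF_smooth hsm).of_le (by exact_mod_cast le_top)).comp ih (fun t ht => hmem t ht)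
        exact hcomp.congr fun t ht => ((hder t ht).deriv)
  have hsmooth : ContDiffOn ℝ ∞ f I := contDiffOn_infty.mpr hsmoothN
  refine ⟨fun t => (f t).1, ε, hε, by show (f 0).1 = p; rw [hf0], ?_, ?_, ?_, ?_⟩
  · -- first derivatives at 0
    intro i
    have h1 : HasDerivAt (fun s => (f s).1 i) ((f 0).2 i) 0 := by
      have hl : HasFDerivAt (fun z : (Fin n → ℝ) × (Fin n → ℝ) => z.1 i)
          ((ContinuousLinearMap.proj i).comp
            (ContinuousLinearMap.fst ℝ (Fin n → ℝ) (Fin n → ℝ))) (f 0) :=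
        (((ContinuousLinearMap.proj i).comp
          (ContinuousLinearMap.fst ℝ (Fin n → ℝ) (Fin n → ℝ)))).hasFDerivAt
      exact hl.comp_hasDerivAt 0 (hder 0 h0I)
    rw [h1.deriv, hf0]
  · exact fun t ht => (hmem t ht).1
  · intro i
    exact ((contDiff_pi.mp contDiff_fst) i).comp_contDiffOn hsmooth
  · intro t ht i
    have hd1 : ∀ m : Fin n, ∀ s ∈ I, HasDerivAt (fun u => (f u).1 m) ((f s).2 m) s := by
      intro m s hs
      have hl := (((ContinuousLinearMap.proj m).comp
          (ContinuousLinearMap.fst ℝ (Fin n → ℝ) (Fin n → ℝ)))).hasFDerivAt (x := f s)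
      exact hl.comp_hasDerivAt s (hder s hs)
    have hd2 : HasDerivAt (fun u => (f u).2 i) ((geoF Γ (f t)).2 i) t := by
      have hl := (((ContinuousLinearMap.proj i).comp
          (ContinuousLinearMap.snd ℝ (Fin n → ℝ) (Fin n → ℝ)))).hasFDerivAt (x := f t)
      exact hl.comp_hasDerivAt t (hder t ht)
    have hev : (fun s => deriv (fun u => (f u).1 i) s) =ᶠ[nhds t] (fun s => (f s).2 i) := by
      filter_upwards [hIopen.mem_nhds ht] with s hs using (hd1 i s hs).deriv
    have e2 : deriv (fun s => deriv (fun u => (f u).1 i) s) t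
        = deriv (fun s => (f s).2 i) t := hev.deriv_eq
    rw [e2, hd2.deriv]
    have e3 : ∀ m : Fin n, deriv (fun u => (f u).1 m) t = (f t).2 m :=
      fun m => (hd1 m t ht).deriv
    simp only [e3, geoF]
    ring



theorem proj_quad {n : ℕ} {U : Set (Fin n → ℝ)} (hU : IsOpen U)
    {Γ Γ' : Christoffel n} (hsm : SmoothChristoffelOn U Γ)
    (hproj : ProjEquivOn U Γ Γ') {p : Fin n → ℝ} (hp : p ∈ U) (v : Fin n → ℝ) :
    ∃ c : ℝ, ∀ i, ∑ j, ∑ k, (Γ' p i j k - Γ p i j k) * v j * v k = c * v i := by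
  obtain ⟨γ, ε, hε, hγ0, hγ'0, hgeo⟩ := exists_geodesic hU hsm hp v
  obtain ⟨h, J, hJopen, ⟨hhsm, hh', hbij⟩, hgeo'⟩ :=
    hproj.1 γ (Set.Ioo (-ε) ε) isOpen_Ioo hgeo
  have h0I : (0:ℝ) ∈ Set.Ioo (-ε) ε := ⟨by linarith, hε⟩
  obtain ⟨t0, ht0J, ht0⟩ := hbij.surjOn h0I
  have hIopen : IsOpen (Set.Ioo (-ε) ε) := isOpen_Ioo
  -- differentiability facts
  have hone : (∞ : WithTop ℕ∞) ≠ 0 := by simp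
  have hdh : ∀ t ∈ J, HasDerivAt h (deriv h t) t := fun t ht =>
    (((hhsm.contDiffAt (hJopen.mem_nhds ht)).differentiableAt hone).hasDerivAt)
  have hγd : ∀ m : Fin n, ∀ x ∈ Set.Ioo (-ε) ε,
      HasDerivAt (fun u => γ u m) (deriv (fun u => γ u m) x) x := fun m x hx =>
    ((((hgeo.2.1 m).contDiffAt (hIopen.mem_nhds hx)).differentiableAt hone).hasDerivAt)
  have chain : ∀ m : Fin n, ∀ t ∈ J, HasDerivAt (fun s => γ (h s) m)
      (deriv (fun u => γ u m) (h t) * deriv h t) t := by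
    intro m t ht
    exact (hγd m (h t) (hbij.mapsTo ht)).comp t (hdh t ht)
  set a := deriv h t0 with hadef
  have ha : a ≠ 0 := hh' t0 ht0J
  set b := deriv (deriv h) t0 with hbdef
  refine ⟨-b / (a * a), ?_⟩
  intro i
  -- derivative of σ components at t0
  have hds : ∀ m : Fin n, deriv (fun u => γ (h u) m) t0 = v m * a := by
    intro m
    rw [(chain m t0 ht0J).deriv, ht0, hγ'0 m]
  -- second derivative of σ_i at t0
  have hderivγi : ContDiffOn ℝ ∞ (deriv (fun u => γ u i)) (Set.Ioo (-ε) ε) :=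
    (hgeo.2.1 i).deriv_of_isOpen hIopen (by exact_mod_cast le_top)
  have hdd : HasDerivAt (deriv (fun u => γ u i))
      (deriv (fun s' => deriv (fun u => γ u i) s') (h t0)) (h t0) :=
    ((hderivγi.contDiffAt (hIopen.mem_nhds (hbij.mapsTo ht0J))).differentiableAt
      hone).hasDerivAt
  have hu : HasDerivAt (fun s => deriv (fun u => γ u i) (h s))
      (deriv (fun s' => deriv (fun u => γ u i) s') (h t0) * deriv h t0) t0 :=
    hdd.comp t0 (hdh t0 ht0J)
  have hderivh : ContDiffOn ℝ ∞ (deriv h) J :=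
    hhsm.deriv_of_isOpen hJopen (by exact_mod_cast le_top)
  have hw : HasDerivAt (deriv h) b t0 :=
    ((hderivh.contDiffAt (hJopen.mem_nhds ht0J)).differentiableAt hone).hasDerivAt
  have hG : HasDerivAt (fun s => deriv (fun u => γ u i) (h s) * deriv h s)
      ((deriv (fun s' => deriv (fun u => γ u i) s') (h t0) * a) * a
        + deriv (fun u => γ u i) (h t0) * b) t0 := hu.mul hw
  have hevent : (fun s => deriv (fun u => γ (h u) i) s)
      =ᶠ[nhds t0] (fun s => deriv (fun u => γ u i) (h s) * deriv h s) := by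
    filter_upwards [hJopen.mem_nhds ht0J] with s hs using (chain i s hs).deriv
  have e2 : deriv (fun s => deriv (fun u => γ (h u) i) s) t0
      = (deriv (fun s' => deriv (fun u => γ u i) s') (h t0) * a) * a
        + deriv (fun u => γ u i) (h t0) * b := by
    rw [hevent.deriv_eq, hG.deriv]
  -- geodesic equations
  have hEΓ := hgeo.2.2 0 h0I i
  have hEΓ' := hgeo'.2.2 t0 ht0J i
  simp only [] at hEΓ'
  rw [e2, ht0, hγ'0 i] at hEΓ'
  rw [hγ0] at hEΓ
  simp only [hγ'0] at hEΓ
  rw [hγ0] at hEΓ'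
  simp only [hds] at hEΓ'
  -- algebra
  set S := ∑ j, ∑ k, Γ p i j k * v j * v k with hS
  set S' := ∑ j, ∑ k, Γ' p i j k * v j * v k with hS'
  have hw2 : deriv (fun s' => deriv (fun u => γ u i) s') 0 = -S := by linarith
  rw [hw2] at hEΓ'
  have hsum1 : ∑ j, ∑ k, Γ' p i j k * (v j * a) * (v k * a) = (a*a) * S' := by
    rw [hS', Finset.mul_sum]
    refine Finset.sum_congr rfl fun j _ => ?_
    rw [Finset.mul_sum]
    exact Finset.sum_congr rfl fun k _ => by ring
  rw [hsum1] at hEΓ'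
  have hgoal : ∑ j, ∑ k, (Γ' p i j k - Γ p i j k) * v j * v k = S' - S := by
    rw [hS', hS, ← Finset.sum_sub_distrib]
    refine Finset.sum_congr rfl fun j _ => ?_
    rw [← Finset.sum_sub_distrib]
    exact Finset.sum_congr rfl fun k _ => by ring
  rw [hgoal]
  have ha2 : a * a ≠ 0 := mul_ne_zero ha ha
  field_simp
  linear_combination hEΓ'


/-- The covariant derivative `K_{i,j}` of a `(0,1)`-tensor `K` of projective weight `w`
(in the local trivialization of `(Λₙ)^{w/(n+1)}` by `(dx¹∧⋯∧dxⁿ)^{w/(n+1)}`):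
`K_{i,j} = ∂_j K_i − Γ^s_{ij} K_s − (w/(n+1)) Γ^s_{sj} K_i`. -/
def covForm {n : ℕ} (w : ℝ) (Γ : Christoffel n) (K : (Fin n → ℝ) → Fin n → ℝ)
    (p : Fin n → ℝ) (i j : Fin n) : ℝ :=
  pd j (fun q => K q i) p - ∑ s, Γ p s i j * K p s
    - (w / ((n : ℝ) + 1)) * (∑ s, Γ p s s j) * K p i

/-- **Eastwood.** For 1-forms of projective weight `−2` the operator
`K ↦ Symmetrization(∇K)`, in indices `K_i ↦ K_{i,j} + K_{j,i}`, is projectively invariant: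
if `∇` and `∇̄` are projectively equivalent torsion-free connections, the symmetrized
covariant derivatives agree. -/
theorem statement_4 {n : ℕ} (hn : 2 ≤ n) (U : Set (Fin n → ℝ)) (hU : IsOpen U)
    (Γ Γ' : Christoffel n) (hTF : TorsionFree Γ) (hTF' : TorsionFree Γ')
    (hsm : SmoothChristoffelOn U Γ) (hsm' : SmoothChristoffelOn U Γ')
    (hproj : ProjEquivOn U Γ Γ')
    (K : (Fin n → ℝ) → Fin n → ℝ) (hK : ∀ i, ContDiffOn ℝ ∞ (fun p => K p i) U) :
    ∀ p ∈ U, ∀ i j,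
      covForm (-2) Γ' K p i j + covForm (-2) Γ' K p j i
        = covForm (-2) Γ K p i j + covForm (-2) Γ K p j i := by
  intro p hp i j
  obtain ⟨φ, hφ⟩ := delta_form (fun s a b => Γ' p s a b - Γ p s a b)
    (fun s a b => by rw [hTF' p s a b, hTF p s a b])
    (fun v => proj_quad hU hsm hproj hp v)
  have hA : ∀ s a b, Γ' p s a b
      = Γ p s a b + ((if s = a then φ b else 0) + (if s = b then φ a else 0)) := by
    intro s a b
    have := hφ s a b
    linarith
  have e1 : ∀ a b : Fin n, ∑ s, Γ' p s a b * K p s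
      = (∑ s, Γ p s a b * K p s) + (φ b * K p a + φ a * K p b) := by
    intro a b
    simp only [hA, add_mul, ite_mul, zero_mul, Finset.sum_add_distrib,
      Finset.sum_ite_eq', Finset.mem_univ, if_true]
  have e2 : ∀ b : Fin n, ∑ s, Γ' p s s b = (∑ s, Γ p s s b) + ((n:ℝ)+1) * φ b := by
    intro b
    simp only [hA, if_pos rfl, Finset.sum_add_distrib,
      Finset.sum_ite_eq', Finset.mem_univ, if_true, Finset.sum_const, Finset.card_univ,
      nsmul_eq_mul, Fintype.card_fin]
    ring
  have hn1 : ((n:ℝ)+1) ≠ 0 := by positivity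
  simp only [covForm]
  rw [e1 i j, e1 j i, e2 i, e2 j]
  field_simp
  ring

end ProjGeo
end
end

section
/- Let M be an oriented n-dimensional manifold and let ∇ and ∇̄ be projectively equivalent torsion-free affine connections on M. Then for every symmetric (0,2)-tensor K of projective weight −4 (a section of the symmetric part of T^{(0,2)}M ⊗ (Λ_n)^{−4/(n+1)}M), the complete symmetrization of the covariant derivative, K_{ij,k} + K_{jk,i} + K_{ki,j}, is the same for ∇ and for ∇̄; i.e., the operator K ↦ Symmetrization(∇K) is projectively invariant on symmetric (0,2)-tensors of projective weight −4. -/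
open scoped ContDiff

noncomputable section

namespace ProjGeo

/-- The covariant derivative `K_{ij,k}` of a `(0,2)`-tensor `K` of projective weight `w`
(in the local trivialization of `(Λₙ)^{w/(n+1)}` by `(dx¹∧⋯∧dxⁿ)^{w/(n+1)}`):
`K_{ij,k} = ∂_k K_{ij} − Γ^s_{ik} K_{sj} − Γ^s_{jk} K_{is} − (w/(n+1)) Γ^s_{sk} K_{ij}`. -/
def covForm2 {n : ℕ} (w : ℝ) (Γ : Christoffel n) (K : (Fin n → ℝ) → Fin n → Fin n → ℝ)
    (p : Fin n → ℝ) (i j k : Fin n) : ℝ :=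
  pd k (fun q => K q i j) p - ∑ s, Γ p s i k * K p s j - ∑ s, Γ p s j k * K p i s
    - (w / ((n : ℝ) + 1)) * (∑ s, Γ p s s k) * K p i j

end ProjGeo

namespace ProjGeo
open Set

lemma bootstrap {E : Type*} [NormedAddCommGroup E] [NormedSpace ℝ E] {G : E → E} {V : Set E}
    (hG : ContDiffOn ℝ ∞ G V) {f : ℝ → E} {I : Set ℝ} (hI : IsOpen I)
    (hfV : ∀ t ∈ I, f t ∈ V) (hf' : ∀ t ∈ I, HasDerivAt f (G (f t)) t) :
    ContDiffOn ℝ ∞ f I := by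
  rw [contDiffOn_infty]
  intro m
  induction m with
  | zero => exact contDiffOn_zero.2 fun t ht =>
      ((hf' t ht).differentiableAt.continuousAt).continuousWithinAt
  | succ m ih =>
    rw [show ((m+1 : ℕ) : WithTop ℕ∞) = (m : WithTop ℕ∞) + 1 by push_cast; rfl,
      contDiffOn_succ_iff_deriv_of_isOpen hI]
    refine ⟨fun t ht => ((hf' t ht).differentiableAt).differentiableWithinAt, by simp, ?_⟩
    have h1 : ContDiffOn ℝ m (G ∘ f) I := (hG.of_le (by exact_mod_cast le_top)).comp ih hfV
    exact h1.congr fun t ht => (hf' t ht).deriv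

lemma key {n : ℕ} (U : Set (Fin n → ℝ)) (hU : IsOpen U) (Γ Γ' : Christoffel n)
    (hsm : SmoothChristoffelOn U Γ)
    (hfwd : ∀ γ I, IsOpen I → IsGeodesicOn U Γ γ I →
      ∃ h J, IsOpen J ∧ IsReparam I J h ∧ IsGeodesicOn U Γ' (fun t => γ (h t)) J)
    (p : Fin n → ℝ) (hp : p ∈ U) (v : Fin n → ℝ) (a b : Fin n) :
    (∑ j, ∑ k, (Γ' p a j k - Γ p a j k) * v j * v k) * v b
      = (∑ j, ∑ k, (Γ' p b j k - Γ p b j k) * v j * v k) * v a := by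
  classical
  set Q : Fin n → ℝ := fun i => ∑ j, ∑ k, Γ p i j k * v j * v k with hQ
  set Q' : Fin n → ℝ := fun i => ∑ j, ∑ k, Γ' p i j k * v j * v k with hQ'
  suffices hS : ∃ c : ℝ, ∀ i, Q' i - Q i = c * v i by
    obtain ⟨c, hc⟩ := hS
    have expand : ∀ i : Fin n,
        ∑ j, ∑ k, (Γ' p i j k - Γ p i j k) * v j * v k = Q' i - Q i := by
      intro i
      rw [hQ, hQ', ← Finset.sum_sub_distrib]
      refine Finset.sum_congr rfl fun j _ => ?_
      rw [← Finset.sum_sub_distrib]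
      refine Finset.sum_congr rfl fun k _ => by ring
    rw [expand a, expand b, hc a, hc b]; ring
  -- set up the geodesic ODE
  set G : (Fin n → ℝ) × (Fin n → ℝ) → (Fin n → ℝ) × (Fin n → ℝ) :=
    fun y => (y.2, fun i => -∑ j, ∑ k, Γ y.1 i j k * y.2 j * y.2 k) with hG
  have hΓc : ∀ i j k, ContDiffOn ℝ ∞
      (fun y : (Fin n → ℝ) × (Fin n → ℝ) => Γ y.1 i j k) (U ×ˢ univ) :=
    fun i j k => (hsm i j k).comp contDiff_fst.contDiffOn (fun y hy => hy.1)
  have huc : ∀ j, ContDiffOn ℝ ∞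
      (fun y : (Fin n → ℝ) × (Fin n → ℝ) => y.2 j) (U ×ˢ univ) :=
    fun j => (((ContinuousLinearMap.proj j (R := ℝ) (φ := fun _ : Fin n => ℝ)).contDiff).comp
      contDiff_snd).contDiffOn
  have hGsm : ContDiffOn ℝ ∞ G (U ×ˢ univ) := by
    refine (contDiff_snd.contDiffOn).prodMk (contDiffOn_pi.2 fun i => ContDiffOn.neg ?_)
    exact ContDiffOn.sum fun j _ => ContDiffOn.sum fun k _ =>
      ((hΓc i j k).mul (huc j)).mul (huc k)
  have hGat : ContDiffAt ℝ 1 G ((p, v) : (Fin n → ℝ) × (Fin n → ℝ)) :=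
    (hGsm.contDiffAt ((hU.prod isOpen_univ).mem_nhds ⟨hp, mem_univ v⟩)).of_le
      (by exact_mod_cast le_top)
  obtain ⟨f, hf0, ε, hε, hf'⟩ := hGat.exists_forall_mem_closedBall_exists_eq_forall_mem_Ioo_hasDerivAt₀ 0
  have hc0 : ContinuousAt f 0 :=
    (hf' 0 ⟨by linarith, by linarith⟩).differentiableAt.continuousAt
  have hmem : f ⁻¹' (U ×ˢ univ) ∈ nhds (0:ℝ) :=
    hc0.preimage_mem_nhds ((hU.prod isOpen_univ).mem_nhds (by rw [hf0]; exact ⟨hp, mem_univ v⟩))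
  obtain ⟨s, hs_sub, hs_open, hs0⟩ := mem_nhds_iff.mp hmem
  set I : Set ℝ := s ∩ Ioo (0 - ε) (0 + ε) with hIdef
  have hIopen : IsOpen I := hs_open.inter isOpen_Ioo
  have h0I : (0:ℝ) ∈ I := ⟨hs0, by constructor <;> simp <;> linarith⟩
  have hfU : ∀ t ∈ I, (f t).1 ∈ U := fun t ht => (hs_sub ht.1).1
  have hf'I : ∀ t ∈ I, HasDerivAt f (G (f t)) t := fun t ht => hf' t ht.2
  have hfsm : ContDiffOn ℝ ∞ f I :=
    bootstrap hGsm hIopen (fun t ht => ⟨hfU t ht, mem_univ _⟩) hf'I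
  set γ : ℝ → Fin n → ℝ := fun t => (f t).1 with hγdef
  -- component derivatives
  have hd1 : ∀ (i : Fin n), ∀ t ∈ I, HasDerivAt (fun u => γ u i) ((f t).2 i) t := by
    intro i t ht
    have hL := ((ContinuousLinearMap.proj i (R := ℝ) (φ := fun _ : Fin n => ℝ)).comp
      (ContinuousLinearMap.fst ℝ (Fin n → ℝ) (Fin n → ℝ))).hasFDerivAt.comp_hasDerivAt t
      (hf'I t ht)
    exact hL
  have hd2 : ∀ (i : Fin n), ∀ t ∈ I, HasDerivAt (fun u => (f u).2 i)
      (-∑ j, ∑ k, Γ (γ t) i j k * (f t).2 j * (f t).2 k) t := by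
    intro i t ht
    have hL := ((ContinuousLinearMap.proj i (R := ℝ) (φ := fun _ : Fin n => ℝ)).comp
      (ContinuousLinearMap.snd ℝ (Fin n → ℝ) (Fin n → ℝ))).hasFDerivAt.comp_hasDerivAt t
      (hf'I t ht)
    exact hL
  have hgeo : IsGeodesicOn U Γ γ I := by
    refine ⟨hfU, fun i => ?_, fun t ht i => ?_⟩
    · exact (((ContinuousLinearMap.proj i (R := ℝ) (φ := fun _ : Fin n => ℝ)).comp
        (ContinuousLinearMap.fst ℝ (Fin n → ℝ) (Fin n → ℝ))).contDiff).comp_contDiffOn hfsm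
    · have e1 : deriv (fun s' => deriv (fun u => γ u i) s') t
          = deriv (fun u => (f u).2 i) t := by
        apply Filter.EventuallyEq.deriv_eq
        filter_upwards [hIopen.mem_nhds ht] with s' hs'
        exact (hd1 i s' hs').deriv
      have e2 : ∀ j : Fin n, deriv (fun u => γ u j) t = (f t).2 j :=
        fun j => (hd1 j t ht).deriv
      rw [e1, (hd2 i t ht).deriv]
      simp only [e2, neg_add_cancel]
  obtain ⟨h, J, hJopen, ⟨hhsm, hh', hbij⟩, hgeo'⟩ := hfwd γ I hIopen hgeo
  obtain ⟨t1, ht1J, ht1⟩ := hbij.surjOn h0I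
  have hmaps : ∀ s' ∈ J, h s' ∈ I := hbij.mapsTo
  have hγ0 : γ 0 = p := by rw [hγdef]; simp [hf0]
  have hu0 : (f (h t1)).2 = v := by rw [ht1, hf0]
  have hhd : ∀ s' ∈ J, HasDerivAt h (deriv h s') s' := fun s' hs' =>
    ((hhsm.contDiffAt (hJopen.mem_nhds hs')).differentiableAt
      (by simp)).hasDerivAt
  have hcd : ∀ (i : Fin n), ∀ s' ∈ J,
      HasDerivAt (fun u => γ (h u) i) ((f (h s')).2 i * deriv h s') s' := by
    intro i s' hs'
    exact (hd1 i (h s') (hmaps s' hs')).comp s' (hhd s' hs')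
  have hh2 : HasDerivAt (deriv h) (deriv (deriv h) t1) t1 := by
    have hdh : ContDiffOn ℝ ∞ (deriv h) J := hhsm.deriv_of_isOpen hJopen le_rfl
    exact ((hdh.contDiffAt (hJopen.mem_nhds ht1J)).differentiableAt
      (by simp)).hasDerivAt
  have hud : ∀ i : Fin n, HasDerivAt (fun s' => (f (h s')).2 i)
      ((-∑ j, ∑ k, Γ (γ (h t1)) i j k * (f (h t1)).2 j * (f (h t1)).2 k) * deriv h t1) t1 :=
    fun i => (hd2 i (h t1) (hmaps t1 ht1J)).comp t1 (hhd t1 ht1J)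
  obtain ⟨_, _, heq⟩ := hgeo'
  refine ⟨-(deriv (deriv h) t1) / (deriv h t1)^2, fun i => ?_⟩
  have H := heq t1 ht1J i
  have e1 : deriv (fun s' => deriv (fun u => γ (h u) i) s') t1
      = deriv (fun s' => (f (h s')).2 i * deriv h s') t1 := by
    apply Filter.EventuallyEq.deriv_eq
    filter_upwards [hJopen.mem_nhds ht1J] with s' hs'
    exact (hcd i s' hs').deriv
  have e2 : deriv (fun s' => (f (h s')).2 i * deriv h s') t1
      = (-Q i) * (deriv h t1)^2 + v i * deriv (deriv h) t1 := by
    have hmd := ((hud i).mul hh2).deriv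
    simp only [Pi.mul_def] at hmd
    rw [hmd]
    rw [ht1, hγ0, hf0]
    simp only [hQ]
    ring
  have e3 : ∀ j : Fin n, deriv (fun u => γ (h u) j) t1 = v j * deriv h t1 := by
    intro j
    rw [(hcd j t1 ht1J).deriv, hu0]
  rw [e1, e2] at H
  simp only [e3] at H
  rw [ht1, hγ0] at H
  have e4 : ∑ j, ∑ k, Γ' p i j k * (v j * deriv h t1) * (v k * deriv h t1)
      = Q' i * (deriv h t1)^2 := by
    rw [hQ', Finset.sum_mul]
    refine Finset.sum_congr rfl fun j _ => ?_
    rw [Finset.sum_mul]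
    exact Finset.sum_congr rfl fun k _ => by ring
  rw [e4] at H
  have hne : deriv h t1 ≠ 0 := hh' t1 ht1J
  have hne2 : (deriv h t1)^2 ≠ 0 := pow_ne_zero 2 hne
  field_simp
  nlinarith [H, sq_nonneg (deriv h t1)]

lemma D_form {n : ℕ} (U : Set (Fin n → ℝ)) (hU : IsOpen U) (Γ Γ' : Christoffel n)
    (hTF : TorsionFree Γ) (hTF' : TorsionFree Γ')
    (hsm : SmoothChristoffelOn U Γ)
    (hfwd : ∀ γ I, IsOpen I → IsGeodesicOn U Γ γ I →
      ∃ h J, IsOpen J ∧ IsReparam I J h ∧ IsGeodesicOn U Γ' (fun t => γ (h t)) J)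
    (p : Fin n → ℝ) (hp : p ∈ U) :
    ∃ φ : Fin n → ℝ, ∀ i j k, Γ' p i j k = Γ p i j k
      + (if i = j then φ k else 0) + (if i = k then φ j else 0) := by
  classical
  obtain ⟨D, hD⟩ : ∃ D : Fin n → Fin n → Fin n → ℝ,
      D = fun i j k => Γ' p i j k - Γ p i j k := ⟨_, rfl⟩
  have Dsymm : ∀ i j k, D i j k = D i k j := by
    intro i j k; simp only [hD]; rw [hTF p i j k, hTF' p i j k]
  have hDval : ∀ i j k, D i j k = Γ' p i j k - Γ p i j k := fun i j k => by rw [hD]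
  set vv : Fin n → Fin n → ℝ → ℝ → Fin n → ℝ :=
    fun j k s t m => s * (if m = j then 1 else 0) + t * (if m = k then 1 else 0) with hvv
  have keyD : ∀ (v : Fin n → ℝ) (a b : Fin n),
      (∑ j, ∑ k, D a j k * v j * v k) * v b = (∑ j, ∑ k, D b j k * v j * v k) * v a :=
    fun v a b => by simp only [hD]; exact key U hU Γ Γ' hsm hfwd p hp v a b
  have expand : ∀ (i j k : Fin n) (s t : ℝ),
      (∑ j', ∑ k', D i j' k' * vv j k s t j' * vv j k s t k')
      = s^2 * D i j j + s*t * D i j k + s*t * D i k j + t^2 * D i k k := by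
    intro i j k s t
    simp only [hvv, mul_add, add_mul, mul_ite, ite_mul, mul_zero, zero_mul, mul_one, one_mul,
      Finset.sum_add_distrib, Finset.sum_ite_eq', Finset.mem_univ, if_true]
    ring
  have R : ∀ (j k : Fin n) (s t : ℝ) (a b : Fin n),
      (s^2 * D a j j + s*t * D a j k + s*t * D a k j + t^2 * D a k k)
        * (s * (if b = j then 1 else 0) + t * (if b = k then 1 else 0))
      = (s^2 * D b j j + s*t * D b j k + s*t * D b k j + t^2 * D b k k)
        * (s * (if a = j then 1 else 0) + t * (if a = k then 1 else 0)) := by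
    intro j k s t a b
    have := keyD (vv j k s t) a b
    rwa [expand, expand] at this
  -- (1): off-diagonal on the diagonal direction vanishes
  have h1 : ∀ a j, a ≠ j → D a j j = 0 := by
    intro a j haj
    have := R j j 1 0 a j
    simp [haj] at this
    linarith
  obtain ⟨φ, hφ⟩ : ∃ φ : Fin n → ℝ, φ = fun i => D i i i / 2 := ⟨_, rfl⟩
  -- (A) and (B)
  have hAB : ∀ j k, j ≠ k → D j j k = φ k ∧ D k j k = φ j := by
    intro j k hjk
    have Rp := R j k 1 1 k j
    have Rm := R j k 1 (-1) k j
    simp [hjk, Ne.symm hjk, h1 k j (Ne.symm hjk), h1 j k hjk,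
      Dsymm j k j, Dsymm k k j] at Rp Rm
    -- Rp : expressions; extract linear relations
    rw [hφ]
    constructor
    · show D j j k = D k k k / 2
      linarith
    · show D k j k = D j j j / 2
      linarith
  have h2 : ∀ a j k, a ≠ j → a ≠ k → j ≠ k → D a j k = 0 := by
    intro a j k haj hak hjk
    have := R j k 1 1 a j
    simp [haj, hak, hjk, Ne.symm hjk, h1 a j haj, h1 a k hak] at this
    have hs := Dsymm a j k
    linarith [this]
  refine ⟨φ, fun i j k => ?_⟩
  have goal_eq : D i j k = (if i = j then φ k else 0) + (if i = k then φ j else 0) → 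
      Γ' p i j k = Γ p i j k + (if i = j then φ k else 0) + (if i = k then φ j else 0) := by
    intro hh
    have h3 := hDval i j k
    linarith [hh, h3]
  apply goal_eq
  by_cases hij : i = j
  · by_cases hik : i = k
    · subst hij; subst hik
      simp [hφ]
      try ring
    · subst hij
      have hik' : i ≠ k := hik
      simp [hik, (hAB i k hik').1]
  · by_cases hik : i = k
    · subst hik
      have hji : j ≠ i := fun hh => hij hh.symm
      simp [hij, (hAB j i hji).2]
    · by_cases hjk : j = k
      · subst hjk
        simp [hij, hik, h1 i j hij]
      · simp [hij, hik, h2 i j k hij hik hjk]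

end ProjGeo

namespace ProjGeo

/-- For symmetric `(0,2)`-tensors of projective weight `−4` the operator
`K ↦ Symmetrization(∇K)`, in indices `K_{ij} ↦ K_{ij,k} + K_{jk,i} + K_{ki,j}`, is
projectively invariant: it is the same for any two projectively equivalent torsion-free
connections. -/
theorem statement_5 {n : ℕ} (hn : 2 ≤ n) (U : Set (Fin n → ℝ)) (hU : IsOpen U)
    (Γ Γ' : Christoffel n) (hTF : TorsionFree Γ) (hTF' : TorsionFree Γ')
    (hsm : SmoothChristoffelOn U Γ) (hsm' : SmoothChristoffelOn U Γ')
    (hproj : ProjEquivOn U Γ Γ')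
    (K : (Fin n → ℝ) → Fin n → Fin n → ℝ)
    (hKsymm : ∀ p i j, K p i j = K p j i)
    (hK : ∀ i j, ContDiffOn ℝ ∞ (fun p => K p i j) U) :
    ∀ p ∈ U, ∀ i j k,
      covForm2 (-4) Γ' K p i j k + covForm2 (-4) Γ' K p j k i + covForm2 (-4) Γ' K p k i j
        = covForm2 (-4) Γ K p i j k + covForm2 (-4) Γ K p j k i
          + covForm2 (-4) Γ K p k i j := by
  intro p hp i j k
  obtain ⟨φ, hφeq⟩ := D_form U hU Γ Γ' hTF hTF' hsm hproj.1 p hp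
  have hn1 : ((n : ℝ) + 1) ≠ 0 := by positivity
  have hdiff : ∀ a b c : Fin n, covForm2 (-4) Γ' K p a b c
      = covForm2 (-4) Γ K p a b c + 2 * φ c * K p a b - φ a * K p c b - φ b * K p a c := by
    intro a b c
    have e1 : ∑ s, Γ' p s a c * K p s b
        = ∑ s, Γ p s a c * K p s b + (φ c * K p a b + φ a * K p c b) := by
      simp only [hφeq, add_mul, ite_mul, zero_mul, Finset.sum_add_distrib,
        Finset.sum_ite_eq', Finset.mem_univ, if_true]
      ring
    have e2 : ∑ s, Γ' p s b c * K p a s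
        = ∑ s, Γ p s b c * K p a s + (φ c * K p a b + φ b * K p a c) := by
      simp only [hφeq, add_mul, ite_mul, zero_mul, Finset.sum_add_distrib,
        Finset.sum_ite_eq', Finset.mem_univ, if_true]
      ring
    have e3 : ∑ s : Fin n, Γ' p s s c = ∑ s : Fin n, Γ p s s c + ((n : ℝ) * φ c + φ c) := by
      simp only [hφeq, Finset.sum_add_distrib, Finset.sum_ite_eq', Finset.mem_univ, if_true]
      simp [Finset.sum_const, Finset.card_univ, mul_comm]
      ring
    simp only [covForm2, e1, e2, e3]
    field_simp
    ring
  rw [hdiff i j k, hdiff j k i, hdiff k i j]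
  rw [hKsymm p k j, hKsymm p j i, hKsymm p k i]
  ring

end ProjGeo
end
end

section
/- Let [∇] be a projective class of torsion-free affine connections on an oriented n-dimensional manifold M (n ≥ 2). If the Levi-Civita connection of a pseudo-Riemannian metric g lies in [∇], then the weighted tensor σ^{ij} := g^{ij} ⊗ (Vol_g)^{2/(n+1)} (a symmetric (2,0)-tensor of projective weight 2) satisfies the metrisability equation: the trace-free part of ∇σ vanishes, i.e., σ^{ij}_{,k} − (1/(n+1))(σ^{is}_{,s} δ^j_k + σ^{js}_{,s} δ^i_k) = 0. Conversely, for every solution σ of this equation with det(σ) ≠ 0 there exists a pseudo-Riemannian metric g whose Levi-Civita connection lies in [∇] and such that σ^{ij} = g^{ij} ⊗ (Vol_g)^{2/(n+1)}. -/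
open scoped ContDiff

noncomputable section

namespace ProjGeo

/-- The covariant derivative `v^i_{,j}` of a `(1,0)`-tensor `v` of projective weight `w`:
`v^i_{,j} = ∂_j v^i + Γ^i_{sj} v^s − (w/(n+1)) Γ^s_{sj} v^i`. -/
def covVec {n : ℕ} (w : ℝ) (Γ : Christoffel n) (v : (Fin n → ℝ) → Fin n → ℝ)
    (p : Fin n → ℝ) (i j : Fin n) : ℝ :=
  pd j (fun q => v q i) p + ∑ s, Γ p i s j * v p s
    - (w / ((n : ℝ) + 1)) * (∑ s, Γ p s s j) * v p i

/-- The covariant derivative `σ^{ij}_{,k}` of a `(2,0)`-tensor `σ` of projective weight `w`: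
`σ^{ij}_{,k} = ∂_k σ^{ij} + Γ^i_{sk} σ^{sj} + Γ^j_{sk} σ^{is} − (w/(n+1)) Γ^s_{sk} σ^{ij}`. -/
def covVec2 {n : ℕ} (w : ℝ) (Γ : Christoffel n) (σ : (Fin n → ℝ) → Fin n → Fin n → ℝ)
    (p : Fin n → ℝ) (i j k : Fin n) : ℝ :=
  pd k (fun q => σ q i j) p + ∑ s, Γ p i s k * σ p s j + ∑ s, Γ p j s k * σ p i s
    - (w / ((n : ℝ) + 1)) * (∑ s, Γ p s s k) * σ p i j

/-- The trace-free part of the covariant derivative of a weight-2 symmetric `(2,0)`-tensor: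
`σ^{ij}_{,k} − (1/(n+1))(σ^{is}_{,s} δ^j_k + σ^{js}_{,s} δ^i_k)`; the metrisability
operator. -/
def mOp {n : ℕ} (Γ : Christoffel n) (σ : (Fin n → ℝ) → Fin n → Fin n → ℝ)
    (p : Fin n → ℝ) (i j k : Fin n) : ℝ :=
  covVec2 2 Γ σ p i j k - (1 / ((n : ℝ) + 1)) *
    ((∑ s, covVec2 2 Γ σ p i s s) * (if j = k then 1 else 0)
      + (∑ s, covVec2 2 Γ σ p j s s) * (if i = k then 1 else 0))

end ProjGeo

namespace ProjGeo

/-- A (pseudo-Riemannian) metric on `U` in coordinates: a smooth symmetric nondegenerate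
matrix-valued function. -/
def MetricOn {n : ℕ} (U : Set (Fin n → ℝ))
    (g : (Fin n → ℝ) → Matrix (Fin n) (Fin n) ℝ) : Prop :=
  (∀ i j, ContDiffOn ℝ ∞ (fun p => g p i j) U) ∧
  (∀ p ∈ U, ∀ i j, g p i j = g p j i) ∧
  (∀ p ∈ U, (g p).det ≠ 0)

/-- A Riemannian (positive definite) metric on `U` in coordinates. -/
def RiemannianOn {n : ℕ} (U : Set (Fin n → ℝ))
    (g : (Fin n → ℝ) → Matrix (Fin n) (Fin n) ℝ) : Prop :=
  MetricOn U g ∧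
  ∀ p ∈ U, ∀ v : Fin n → ℝ, v ≠ 0 → 0 < ∑ i, ∑ j, g p i j * v i * v j

/-- The Christoffel symbols of the Levi-Civita connection of the metric `g`:
`Γ^i_{jk} = ½ g^{is} (∂_j g_{sk} + ∂_k g_{sj} − ∂_s g_{jk})`. -/
def LeviCivita {n : ℕ} (g : (Fin n → ℝ) → Matrix (Fin n) (Fin n) ℝ) : Christoffel n :=
  fun p i j k => (1 / 2) * ∑ s, (g p)⁻¹ i s *
    (pd j (fun q => g q s k) p + pd k (fun q => g q s j) p - pd s (fun q => g q j k) p)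

end ProjGeo

namespace ProjGeo

/-- The solution of the metrisability equation corresponding to a metric `g`:
`σ^{ij} = g^{ij} ⊗ (Vol_g)^{2/(n+1)}`, which in the local trivialization by
`(dx¹∧⋯∧dxⁿ)^{2/(n+1)}` reads `σ^{ij} = g^{ij} |det g|^{1/(n+1)}`. -/
def sigmaOf {n : ℕ} (g : (Fin n → ℝ) → Matrix (Fin n) (Fin n) ℝ) :
    (Fin n → ℝ) → Fin n → Fin n → ℝ :=
  fun p i j => (g p)⁻¹ i j * |(g p).det| ^ (1 / ((n : ℝ) + 1))

end ProjGeo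

namespace ProjGeo


variable {n : ℕ} {p : Fin n → ℝ} {j : Fin n} {f g : (Fin n → ℝ) → ℝ}

lemma pd_congr_nhds (h : f =ᶠ[nhds p] g) : pd j f p = pd j g p := by
  unfold pd; rw [Filter.EventuallyEq.fderiv_eq h]

lemma pd_const (c : ℝ) : pd j (fun _ => c) p = 0 := by
  unfold pd; rw [fderiv_fun_const]; simp

lemma pd_add (hf : DifferentiableAt ℝ f p) (hg : DifferentiableAt ℝ g p) :
    pd j (fun q => f q + g q) p = pd j f p + pd j g p := by
  unfold pd; rw [fderiv_fun_add hf hg]; simp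

lemma pd_sub (hf : DifferentiableAt ℝ f p) (hg : DifferentiableAt ℝ g p) :
    pd j (fun q => f q - g q) p = pd j f p - pd j g p := by
  unfold pd; rw [fderiv_fun_sub hf hg]; simp

lemma pd_mul (hf : DifferentiableAt ℝ f p) (hg : DifferentiableAt ℝ g p) :
    pd j (fun q => f q * g q) p = pd j f p * g p + f p * pd j g p := by
  unfold pd; rw [fderiv_fun_mul hf hg]; simp; ring

lemma pd_const_mul (c : ℝ) (hf : DifferentiableAt ℝ f p) :
    pd j (fun q => c * f q) p = c * pd j f p := by
  unfold pd; rw [fderiv_const_mul hf]; simp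

lemma pd_sum {ι : Type*} (s : Finset ι) (F : ι → (Fin n → ℝ) → ℝ)
    (hF : ∀ i ∈ s, DifferentiableAt ℝ (F i) p) :
    pd j (fun q => ∑ i ∈ s, F i q) p = ∑ i ∈ s, pd j (F i) p := by
  unfold pd
  rw [(HasFDerivAt.fun_sum (fun i hi => (hF i hi).hasFDerivAt)).fderiv]
  simp

lemma pd_prod {ι : Type*} [DecidableEq ι] (s : Finset ι) (F : ι → (Fin n → ℝ) → ℝ)
    (hF : ∀ i ∈ s, DifferentiableAt ℝ (F i) p) :
    pd j (fun q => ∏ i ∈ s, F i q) p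
      = ∑ i ∈ s, (∏ i' ∈ s.erase i, F i' p) * pd j (F i) p := by
  unfold pd
  rw [fderiv_finset_prod hF]
  simp [ContinuousLinearMap.sum_apply, smul_eq_mul]

lemma pd_comp {F : ℝ → ℝ} {c : ℝ} (hF : HasDerivAt F c (f p))
    (hf : DifferentiableAt ℝ f p) :
    pd j (fun q => F (f q)) p = c * pd j f p := by
  unfold pd
  have h := (hF.comp_hasFDerivAt p hf.hasFDerivAt)
  rw [show (fun q => F (f q)) = F ∘ f from rfl, h.fderiv]
  simp

lemma DifferentiableAt.pd_sum' : True := trivial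


variable {n : ℕ} {p : Fin n → ℝ} {M : (Fin n → ℝ) → Matrix (Fin n) (Fin n) ℝ}

lemma det_fun_eq (M : (Fin n → ℝ) → Matrix (Fin n) (Fin n) ℝ) :
    (fun q => (M q).det)
      = fun q => ∑ σ : Equiv.Perm (Fin n), ((Equiv.Perm.sign σ : ℤ) : ℝ) * ∏ c, M q (σ c) c := by
  funext q; rw [Matrix.det_apply']

lemma dat_finset_prod {ι : Type*} [DecidableEq ι] {u : Finset ι} {F : ι → (Fin n → ℝ) → ℝ}
    (h : ∀ i ∈ u, DifferentiableAt ℝ (F i) p) :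
    DifferentiableAt ℝ (fun q => ∏ i ∈ u, F i q) p :=
  (HasFDerivAt.finset_prod fun i hi => (h i hi).hasFDerivAt).differentiableAt

lemma differentiableAt_det (hM : ∀ a b, DifferentiableAt ℝ (fun q => M q a b) p) :
    DifferentiableAt ℝ (fun q => (M q).det) p := by
  rw [det_fun_eq]
  refine DifferentiableAt.fun_sum fun σ _ => DifferentiableAt.const_mul ?_ _
  exact dat_finset_prod (fun c _ => hM (σ c) c)

lemma adjugate_as_sum (A : Matrix (Fin n) (Fin n) ℝ) (a b : Fin n) :
    A.adjugate b a
      = ∑ σ : Equiv.Perm (Fin n), ((Equiv.Perm.sign σ : ℤ) : ℝ) *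
          (if σ b = a then ∏ c ∈ Finset.univ.erase b, A (σ c) c else 0) := by
  rw [Matrix.adjugate_apply, Matrix.det_apply']
  refine Finset.sum_congr rfl fun σ _ => ?_
  congr 1
  by_cases h : σ b = a
  · rw [if_pos h]
    rw [← Finset.mul_prod_erase Finset.univ _ (Finset.mem_univ b)]
    have hb : A.updateRow a (Pi.single b 1) (σ b) b = 1 := by
      simp [Matrix.updateRow_apply, h]
    rw [hb, one_mul]
    refine Finset.prod_congr rfl fun c hc => ?_
    have hcb : c ≠ b := Finset.ne_of_mem_erase hc
    have hca : σ c ≠ a := fun hca => hcb (σ.injective (hca.trans h.symm))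
    simp [Matrix.updateRow_apply, hca]
  · rw [if_neg h]
    refine Finset.prod_eq_zero (Finset.mem_univ (σ.symm a)) ?_
    have h1 : σ (σ.symm a) = a := σ.apply_symm_apply a
    have h2 : σ.symm a ≠ b := fun hb' => h (by rw [← hb', h1])
    simp [Matrix.updateRow_apply, h1, Pi.single_apply, h2]

lemma pd_det (hM : ∀ a b, DifferentiableAt ℝ (fun q => M q a b) p) (k : Fin n) :
    pd k (fun q => (M q).det) p
      = ∑ a, ∑ b, (M p).adjugate b a * pd k (fun q => M q a b) p := by
  have hprod : ∀ σ : Equiv.Perm (Fin n),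
      DifferentiableAt ℝ (fun q => ∏ c, M q (σ c) c) p := fun σ =>
    dat_finset_prod (fun c _ => hM (σ c) c)
  rw [det_fun_eq M, pd_sum Finset.univ _ (fun σ _ => (hprod σ).const_mul _)]
  have step : ∀ σ : Equiv.Perm (Fin n),
      pd k (fun q => ((Equiv.Perm.sign σ : ℤ) : ℝ) * ∏ c, M q (σ c) c) p
        = ∑ b, ((Equiv.Perm.sign σ : ℤ) : ℝ) *
            ((∏ c ∈ Finset.univ.erase b, M p (σ c) c) * pd k (fun q => M q (σ b) b) p) := by
    intro σ
    rw [pd_const_mul _ (hprod σ), pd_prod Finset.univ _ (fun c _ => hM (σ c) c), Finset.mul_sum]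
  simp only [step]
  rw [Finset.sum_comm]
  conv_rhs => rw [Finset.sum_comm]
  refine Finset.sum_congr rfl fun b _ => ?_
  simp only [adjugate_as_sum, Finset.sum_mul, mul_ite, mul_zero, ite_mul, zero_mul]
  rw [Finset.sum_comm]
  refine Finset.sum_congr rfl fun σ _ => ?_
  rw [Finset.sum_ite_eq Finset.univ (σ b)]
  simp [mul_assoc]


variable {n : ℕ} {p : Fin n → ℝ} {M : (Fin n → ℝ) → Matrix (Fin n) (Fin n) ℝ}

lemma dat_adjugate_entry (hM : ∀ a b, DifferentiableAt ℝ (fun q => M q a b) p) (i j : Fin n) :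
    DifferentiableAt ℝ (fun q => (M q).adjugate i j) p := by
  have : (fun q => (M q).adjugate i j)
      = fun q => ((M q).updateRow j (Pi.single i 1)).det := by
    funext q; rw [Matrix.adjugate_apply]
  rw [this]
  refine differentiableAt_det fun a b => ?_
  by_cases h : a = j
  · simpa [Matrix.updateRow_apply, h] using differentiableAt_const _
  · simpa [Matrix.updateRow_apply, h] using hM a b

lemma inv_entry_eq (A : Matrix (Fin n) (Fin n) ℝ) (i j : Fin n) :
    A⁻¹ i j = (A.det)⁻¹ * A.adjugate i j := by
  rw [Matrix.inv_def, Matrix.smul_apply, Ring.inverse_eq_inv, smul_eq_mul]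

lemma dat_inv_entry (hM : ∀ a b, DifferentiableAt ℝ (fun q => M q a b) p)
    (hdet : (M p).det ≠ 0) (i j : Fin n) :
    DifferentiableAt ℝ (fun q => (M q)⁻¹ i j) p := by
  have : (fun q => (M q)⁻¹ i j) = fun q => ((M q).det)⁻¹ * (M q).adjugate i j := by
    funext q; exact inv_entry_eq _ _ _
  rw [this]
  exact ((differentiableAt_det hM).inv hdet).mul (dat_adjugate_entry hM i j)

lemma pd_inv_entry (hM : ∀ a b, DifferentiableAt ℝ (fun q => M q a b) p)
    (hcont : ContinuousAt (fun q => (M q).det) p)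
    (hdet : (M p).det ≠ 0) (i j k : Fin n) :
    pd k (fun q => (M q)⁻¹ i j) p
      = -∑ a, ∑ b, (M p)⁻¹ i a * pd k (fun q => M q a b) p * (M p)⁻¹ b j := by
  have hN : ∀ a b, DifferentiableAt ℝ (fun q => (M q)⁻¹ a b) p :=
    fun a b => dat_inv_entry hM hdet a b
  have hid : ∀ a : Fin n,
      pd k (fun q => ∑ b, M q a b * (M q)⁻¹ b j) p = 0 := by
    intro a
    have hev : (fun q => ∑ b, M q a b * (M q)⁻¹ b j)
        =ᶠ[nhds p] (fun _ => if a = j then (1:ℝ) else 0) := by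
      filter_upwards [hcont.eventually_ne hdet] with q hq
      have : (M q * (M q)⁻¹) a j = (1 : Matrix (Fin n) (Fin n) ℝ) a j := by
        rw [Matrix.mul_nonsing_inv _ (isUnit_iff_ne_zero.mpr hq)]
      simpa [Matrix.mul_apply, Matrix.one_apply] using this
    rw [pd_congr_nhds hev, pd_const]
  have hexp : ∀ a : Fin n,
      (∑ b, (pd k (fun q => M q a b) p * (M p)⁻¹ b j
        + M p a b * pd k (fun q => (M q)⁻¹ b j) p)) = 0 := by
    intro a
    rw [← hid a, pd_sum Finset.univ _ (fun b _ => (hM a b).fun_mul (hN b j))]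
    exact Finset.sum_congr rfl fun b _ => (pd_mul (hM a b) (hN b j)).symm
  have key : ∑ a, (M p)⁻¹ i a *
      (∑ b, (pd k (fun q => M q a b) p * (M p)⁻¹ b j
        + M p a b * pd k (fun q => (M q)⁻¹ b j) p)) = 0 := by
    simp [hexp]
  have hNM : ∀ b, (∑ a, (M p)⁻¹ i a * M p a b) = if i = b then (1:ℝ) else 0 := by
    intro b
    have : ((M p)⁻¹ * M p) i b = (1 : Matrix (Fin n) (Fin n) ℝ) i b := by
      rw [Matrix.nonsing_inv_mul _ (isUnit_iff_ne_zero.mpr hdet)]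
    simpa [Matrix.mul_apply, Matrix.one_apply] using this
  have expand : ∑ a, (M p)⁻¹ i a *
      (∑ b, (pd k (fun q => M q a b) p * (M p)⁻¹ b j
        + M p a b * pd k (fun q => (M q)⁻¹ b j) p))
      = (∑ a, ∑ b, (M p)⁻¹ i a * pd k (fun q => M q a b) p * (M p)⁻¹ b j)
        + pd k (fun q => (M q)⁻¹ i j) p := by
    simp only [Finset.mul_sum, mul_add, Finset.sum_add_distrib]
    congr 1
    · exact Finset.sum_congr rfl fun a _ => Finset.sum_congr rfl fun b _ => by ring
    · rw [Finset.sum_comm]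
      have : ∀ b, ∑ a, (M p)⁻¹ i a * (M p a b * pd k (fun q => (M q)⁻¹ b j) p)
          = (if i = b then (1:ℝ) else 0) * pd k (fun q => (M q)⁻¹ b j) p := by
        intro b
        rw [← hNM b, Finset.sum_mul]
        exact Finset.sum_congr rfl fun a _ => by ring
      simp only [this, ite_mul, one_mul, zero_mul]
      simp
  rw [expand] at key
  linarith [key]

lemma hasDerivAt_abs_rpow {x : ℝ} (hx : x ≠ 0) (c : ℝ) :
    HasDerivAt (fun y => |y| ^ c) (c * |x| ^ c / x) x := by
  rcases hx.lt_or_gt with hneg | hpos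
  · have h1 : HasDerivAt (fun y : ℝ => -y) (-1) x := (hasDerivAt_id x).neg
    have h2 : HasDerivAt (fun z : ℝ => z ^ c) (c * (-x) ^ (c - 1)) (-x) :=
      Real.hasDerivAt_rpow_const (Or.inl (by linarith))
    have h3 := h2.comp x h1
    have hev : (fun y => |y| ^ c) =ᶠ[nhds x] (fun y => (-y) ^ c) := by
      filter_upwards [eventually_lt_nhds hneg] with y hy
      rw [abs_of_neg hy]
    have h4 : HasDerivAt (fun y => |y| ^ c) (c * (-x) ^ (c - 1) * (-1)) x :=
      h3.congr_of_eventuallyEq hev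
    convert h4 using 1
    rw [abs_of_neg hneg, Real.rpow_sub (by linarith), Real.rpow_one]
    field_simp
  · have h2 : HasDerivAt (fun z : ℝ => z ^ c) (c * x ^ (c - 1)) x :=
      Real.hasDerivAt_rpow_const (Or.inl hx)
    have hev : (fun y => |y| ^ c) =ᶠ[nhds x] (fun y => y ^ c) := by
      filter_upwards [eventually_gt_nhds hpos] with y hy
      rw [abs_of_pos hy]
    have h4 := h2.congr_of_eventuallyEq hev
    refine h4.congr_deriv ?_
    rw [abs_of_pos hpos, Real.rpow_sub hpos, Real.rpow_one]
    field_simp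


variable {n : ℕ} {p : Fin n → ℝ}

lemma bracket_zero (Gi : Matrix (Fin n) (Fin n) ℝ) (D : Fin n → Fin n → Fin n → ℝ)
    (hGi : ∀ a b, Gi a b = Gi b a) (hD : ∀ k a b, D k a b = D k b a) (i j k : Fin n) :
    (∑ s, ((1:ℝ)/2 * ∑ a, Gi i a * (D s a k + D k a s - D a s k)) * Gi s j)
      + ∑ s, ((1:ℝ)/2 * ∑ a, Gi j a * (D s a k + D k a s - D a s k)) * Gi i s
      = ∑ a, ∑ b, Gi i a * D k a b * Gi b j := by
  have e1 : (∑ s, ((1:ℝ)/2 * ∑ a, Gi i a * (D s a k + D k a s - D a s k)) * Gi s j)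
      = ∑ s, ∑ a, (1:ℝ)/2 * (Gi i a * Gi s j * (D s a k + D k a s - D a s k)) := by
    refine Finset.sum_congr rfl fun s _ => ?_
    rw [mul_comm, Finset.mul_sum, Finset.mul_sum]
    exact Finset.sum_congr rfl fun a _ => by ring
  have e2 : (∑ s, ((1:ℝ)/2 * ∑ a, Gi j a * (D s a k + D k a s - D a s k)) * Gi i s)
      = ∑ s, ∑ a, (1:ℝ)/2 * (Gi j a * Gi i s * (D s a k + D k a s - D a s k)) := by
    refine Finset.sum_congr rfl fun s _ => ?_
    rw [mul_comm, Finset.mul_sum, Finset.mul_sum]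
    exact Finset.sum_congr rfl fun a _ => by ring
  have e2' : (∑ s, ∑ a, (1:ℝ)/2 * (Gi j a * Gi i s * (D s a k + D k a s - D a s k)))
      = ∑ s, ∑ a, (1:ℝ)/2 * (Gi j s * Gi i a * (D a s k + D k a s - D s a k)) := by
    rw [Finset.sum_comm]
    refine Finset.sum_congr rfl fun s _ => Finset.sum_congr rfl fun a _ => ?_
    rw [hD k s a]
  have e3 : (∑ a, ∑ b, Gi i a * D k a b * Gi b j)
      = ∑ s, ∑ a, Gi i a * D k a s * Gi s j := Finset.sum_comm
  rw [e1, e2, e2', e3, ← Finset.sum_add_distrib]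
  refine Finset.sum_congr rfl fun s _ => ?_
  rw [← Finset.sum_add_distrib]
  refine Finset.sum_congr rfl fun a _ => ?_
  rw [hGi j s]
  ring

/-- trace of Levi-Civita symbols -/
lemma trace_LC (g : (Fin n → ℝ) → Matrix (Fin n) (Fin n) ℝ)
    (hGi : ∀ a b, (g p)⁻¹ a b = (g p)⁻¹ b a)
    (hD : ∀ (k a b : Fin n), pd k (fun q => g q a b) p = pd k (fun q => g q b a) p)
    (k : Fin n) :
    (∑ s, LeviCivita g p s s k)
      = (1/2) * ∑ a, ∑ b, (g p)⁻¹ b a * pd k (fun q => g q a b) p := by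
  unfold LeviCivita
  have e1 : ∀ s : Fin n, (1:ℝ) / 2 * ∑ a, (g p)⁻¹ s a *
        (pd s (fun q => g q a k) p + pd k (fun q => g q a s) p - pd a (fun q => g q s k) p)
      = ∑ a, (1:ℝ)/2 * ((g p)⁻¹ s a *
        (pd s (fun q => g q a k) p + pd k (fun q => g q a s) p - pd a (fun q => g q s k) p)) := by
    intro s; rw [Finset.mul_sum]
  simp only [e1]
  have e2 : (∑ s, ∑ a, ((g p)⁻¹ s a * pd s (fun q => g q a k) p))
      = ∑ s, ∑ a, ((g p)⁻¹ s a * pd a (fun q => g q s k) p) := by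
    rw [Finset.sum_comm]
    refine Finset.sum_congr rfl fun s _ => Finset.sum_congr rfl fun a _ => ?_
    rw [hGi s a]
  rw [Finset.mul_sum]
  have expand : ∀ s a : Fin n, (1:ℝ)/2 * ((g p)⁻¹ s a *
        (pd s (fun q => g q a k) p + pd k (fun q => g q a s) p - pd a (fun q => g q s k) p))
      = (1:ℝ)/2 * ((g p)⁻¹ s a * pd s (fun q => g q a k) p)
        + (1:ℝ)/2 * ((g p)⁻¹ s a * pd k (fun q => g q a s) p)
        - (1:ℝ)/2 * ((g p)⁻¹ s a * pd a (fun q => g q s k) p) := fun s a => by ring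
  calc (∑ s, ∑ a, (1:ℝ)/2 * ((g p)⁻¹ s a *
        (pd s (fun q => g q a k) p + pd k (fun q => g q a s) p - pd a (fun q => g q s k) p)))
      = (∑ s, ∑ a, (1:ℝ)/2 * ((g p)⁻¹ s a * pd s (fun q => g q a k) p))
        + (∑ s, ∑ a, (1:ℝ)/2 * ((g p)⁻¹ s a * pd k (fun q => g q a s) p))
        - ∑ s, ∑ a, (1:ℝ)/2 * ((g p)⁻¹ s a * pd a (fun q => g q s k) p) := by
        simp only [expand, Finset.sum_add_distrib, Finset.sum_sub_distrib]
    _ = ∑ s, ∑ a, (1:ℝ)/2 * ((g p)⁻¹ s a * pd k (fun q => g q a s) p) := by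
        have : (∑ s, ∑ a, (1:ℝ)/2 * ((g p)⁻¹ s a * pd s (fun q => g q a k) p))
            = ∑ s, ∑ a, (1:ℝ)/2 * ((g p)⁻¹ s a * pd a (fun q => g q s k) p) := by
          simp only [← Finset.mul_sum]
          rw [e2]
        rw [this]; ring
    _ = ∑ a, ∑ b, (1:ℝ)/2 * ((g p)⁻¹ b a * pd k (fun q => g q a b) p) := by
        rw [Finset.sum_comm]
  exact Finset.sum_congr rfl fun a _ => by rw [Finset.mul_sum]


variable {n : ℕ} {p : Fin n → ℝ}

lemma covVec2_LC_sigma_zero (g : (Fin n → ℝ) → Matrix (Fin n) (Fin n) ℝ)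
    (hdat : ∀ a b, DifferentiableAt ℝ (fun q => g q a b) p)
    (hcont : ContinuousAt (fun q => (g q).det) p)
    (hdet : (g p).det ≠ 0)
    (hsymm_ev : ∀ a b, (fun q => g q a b) =ᶠ[nhds p] (fun q => g q b a))
    (hsym : ∀ a b, g p a b = g p b a)
    (i j k : Fin n) :
    covVec2 2 (LeviCivita g) (sigmaOf g) p i j k = 0 := by
  have hc : ((n : ℝ) + 1) ≠ 0 := by positivity
  set c : ℝ := 1 / ((n : ℝ) + 1) with hcdef
  set W : ℝ := |(g p).det| ^ c with hWdef
  have hT : (g p).transpose = g p := Matrix.ext fun a b => hsym b a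
  have hGi : ∀ a b, (g p)⁻¹ a b = (g p)⁻¹ b a := by
    intro a b
    have h1 : ((g p)⁻¹).transpose = (g p)⁻¹ := by
      rw [Matrix.transpose_nonsing_inv, hT]
    calc (g p)⁻¹ a b = ((g p)⁻¹).transpose b a := rfl
      _ = (g p)⁻¹ b a := by rw [h1]
  have hD : ∀ (m a b : Fin n), pd m (fun q => g q a b) p = pd m (fun q => g q b a) p :=
    fun m a b => pd_congr_nhds (hsymm_ev a b)
  have hadj : ∀ a b, (g p).adjugate a b = (g p).det * (g p)⁻¹ a b := by
    intro a b; rw [inv_entry_eq]; field_simp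
  set T : Fin n → ℝ := fun m => ∑ a, ∑ b, (g p)⁻¹ b a * pd m (fun q => g q a b) p with hTdef
  have hpddet : ∀ m, pd m (fun q => (g q).det) p = (g p).det * T m := by
    intro m
    rw [pd_det hdat m, hTdef, Finset.mul_sum]
    refine Finset.sum_congr rfl fun a _ => ?_
    rw [Finset.mul_sum]
    exact Finset.sum_congr rfl fun b _ => by rw [hadj]; ring
  have hdatw : DifferentiableAt ℝ (fun q => |(g q).det| ^ c) p :=
    by have := ((hasDerivAt_abs_rpow hdet c).comp_hasFDerivAt p
      (differentiableAt_det hdat).hasFDerivAt).differentiableAt; exact this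
  have hpdw : ∀ m, pd m (fun q => |(g q).det| ^ c) p = c * W * T m := by
    intro m
    rw [pd_comp (hasDerivAt_abs_rpow hdet c) (differentiableAt_det hdat), hpddet m, hWdef]
    field_simp
  have htrace := trace_LC (p := p) g hGi hD k
  have hbz := bracket_zero (g p)⁻¹ (fun m a b => pd m (fun q => g q a b) p) hGi hD i j k
  -- unfold covVec2 and sigmaOf
  show pd k (fun q => sigmaOf g q i j) p
      + ∑ s, LeviCivita g p i s k * sigmaOf g p s j
      + ∑ s, LeviCivita g p j s k * sigmaOf g p i s
      - (2 / ((n:ℝ) + 1)) * (∑ s, LeviCivita g p s s k) * sigmaOf g p i j = 0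
  have hσ : ∀ a b, sigmaOf g p a b = (g p)⁻¹ a b * W := fun a b => rfl
  have hσfun : ∀ a b, (fun q => sigmaOf g q a b)
      = fun q => (g q)⁻¹ a b * |(g q).det| ^ c := fun a b => rfl
  have hpdσ : pd k (fun q => sigmaOf g q i j) p
      = (-∑ a, ∑ b, (g p)⁻¹ i a * pd k (fun q => g q a b) p * (g p)⁻¹ b j) * W
        + (g p)⁻¹ i j * (c * W * T k) := by
    rw [hσfun, pd_mul (dat_inv_entry hdat hdet i j) hdatw,
      pd_inv_entry hdat hcont hdet i j k, hpdw k]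
  have hLC : ∀ (x s : Fin n), LeviCivita g p x s k
      = (1:ℝ)/2 * ∑ a, (g p)⁻¹ x a *
          (pd s (fun q => g q a k) p + pd k (fun q => g q a s) p - pd a (fun q => g q s k) p) := by
    intro x s; rfl
  have hsum1 : (∑ s, LeviCivita g p i s k * sigmaOf g p s j)
      = (∑ s, LeviCivita g p i s k * (g p)⁻¹ s j) * W := by
    rw [Finset.sum_mul]
    exact Finset.sum_congr rfl fun s _ => by rw [hσ]; ring
  have hsum2 : (∑ s, LeviCivita g p j s k * sigmaOf g p i s)
      = (∑ s, LeviCivita g p j s k * (g p)⁻¹ i s) * W := by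
    rw [Finset.sum_mul]
    exact Finset.sum_congr rfl fun s _ => by rw [hσ]; ring
  have hQ : (∑ s, LeviCivita g p i s k * (g p)⁻¹ s j)
      + (∑ s, LeviCivita g p j s k * (g p)⁻¹ i s)
      = ∑ a, ∑ b, (g p)⁻¹ i a * pd k (fun q => g q a b) p * (g p)⁻¹ b j := by
    rw [← hbz]
    rfl
  rw [hpdσ, hsum1, hsum2, hσ, htrace]
  have h2c : (2 / ((n:ℝ) + 1)) = 2 * c := by rw [hcdef]; ring
  rw [h2c]
  have := hQ
  set Q := ∑ a, ∑ b, (g p)⁻¹ i a * pd k (fun q => g q a b) p * (g p)⁻¹ b j with hQdef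
  set S1 := ∑ s, LeviCivita g p i s k * (g p)⁻¹ s j
  set S2 := ∑ s, LeviCivita g p j s k * (g p)⁻¹ i s
  have hTQ : (1:ℝ)/2 * ∑ a, ∑ b, (g p)⁻¹ b a * pd k (fun q => g q a b) p = (1:ℝ)/2 * T k := by
    rw [hTdef]
  rw [hTQ]
  -- goal: -Q * W + Gi i j * (c*W*T k) + S1*W + S2*W - 2*c*(1/2*T k)*(Gi i j*W) = 0
  have hfin : S1 + S2 = Q := this
  linear_combination W * hfin

variable {n : ℕ} {p : Fin n → ℝ}

lemma covVec2_change (Γ Γhat : Christoffel n) (φ : (Fin n → ℝ) → Fin n → ℝ)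
    (σ : (Fin n → ℝ) → Fin n → Fin n → ℝ)
    (hrel : ∀ i j k, Γhat p i j k = Γ p i j k
      + (if i = j then φ p k else 0) + (if i = k then φ p j else 0))
    (i j k : Fin n) :
    covVec2 2 Γhat σ p i j k = covVec2 2 Γ σ p i j k
      + (if i = k then (∑ s, φ p s * σ p s j) else 0)
      + (if j = k then (∑ s, φ p s * σ p i s) else 0) := by
  have hc : ((n : ℝ) + 1) ≠ 0 := by positivity
  have h1 : (∑ s, Γhat p i s k * σ p s j)
      = (∑ s, Γ p i s k * σ p s j) + φ p k * σ p i j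
        + (if i = k then (∑ s, φ p s * σ p s j) else 0) := by
    simp only [hrel, add_mul, Finset.sum_add_distrib, ite_mul, zero_mul,
      Finset.sum_ite_eq, Finset.mem_univ, if_true, Finset.sum_ite_irrel, Finset.sum_const_zero]
  have h2 : (∑ s, Γhat p j s k * σ p i s)
      = (∑ s, Γ p j s k * σ p i s) + φ p k * σ p i j
        + (if j = k then (∑ s, φ p s * σ p i s) else 0) := by
    simp only [hrel, add_mul, Finset.sum_add_distrib, ite_mul, zero_mul,
      Finset.sum_ite_eq, Finset.mem_univ, if_true, Finset.sum_ite_irrel, Finset.sum_const_zero]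
  have h3 : (∑ s, Γhat p s s k) = (∑ s, Γ p s s k) + ((n:ℝ) + 1) * φ p k := by
    simp only [hrel, Finset.sum_add_distrib, if_true, Finset.sum_ite_eq',
      Finset.mem_univ, Finset.sum_const, Finset.card_univ, Fintype.card_fin,
      nsmul_eq_mul]
    ring
  have hcc : (2 / ((n:ℝ) + 1)) * ((∑ s, Γ p s s k) + ((n:ℝ)+1) * φ p k) * σ p i j
      = (2 / ((n:ℝ) + 1)) * (∑ s, Γ p s s k) * σ p i j + 2 * φ p k * σ p i j := by
    field_simp
  show pd k (fun q => σ q i j) p + (∑ s, Γhat p i s k * σ p s j)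
      + (∑ s, Γhat p j s k * σ p i s)
      - (2 / ((n:ℝ) + 1)) * (∑ s, Γhat p s s k) * σ p i j = _
  rw [h1, h2, h3, hcc]
  show _ = pd k (fun q => σ q i j) p + (∑ s, Γ p i s k * σ p s j)
      + (∑ s, Γ p j s k * σ p i s)
      - (2 / ((n:ℝ) + 1)) * (∑ s, Γ p s s k) * σ p i j
      + (if i = k then (∑ s, φ p s * σ p s j) else 0)
      + (if j = k then (∑ s, φ p s * σ p i s) else 0)
  ring

lemma mOp_projchange (Γ Γhat : Christoffel n) (φ : (Fin n → ℝ) → Fin n → ℝ)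
    (σ : (Fin n → ℝ) → Fin n → Fin n → ℝ)
    (hσ : ∀ a b, σ p a b = σ p b a)
    (hrel : ∀ i j k, Γhat p i j k = Γ p i j k
      + (if i = j then φ p k else 0) + (if i = k then φ p j else 0))
    (i j k : Fin n) :
    mOp Γhat σ p i j k = mOp Γ σ p i j k := by
  have hc : ((n : ℝ) + 1) ≠ 0 := by positivity
  have hA : ∀ x, (∑ s, φ p s * σ p s x) = ∑ s, φ p s * σ p x s := by
    intro x; exact Finset.sum_congr rfl fun s _ => by rw [hσ s x]
  have htr : ∀ x, (∑ s, covVec2 2 Γhat σ p x s s)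
      = (∑ s, covVec2 2 Γ σ p x s s) + ((n:ℝ) + 1) * (∑ s, φ p s * σ p x s) := by
    intro x
    have hss : ∀ s : Fin n, (if s = s then (∑ t, φ p t * σ p x t) else 0)
        = ∑ t, φ p t * σ p x t := fun s => if_pos rfl
    simp only [covVec2_change Γ Γhat φ σ hrel, hss]
    rw [Finset.sum_add_distrib, Finset.sum_add_distrib, Finset.sum_ite_eq,
      Finset.sum_const, Finset.card_univ, Fintype.card_fin, nsmul_eq_mul]
    simp only [Finset.mem_univ, if_true]
    rw [hA x]
    ring
  unfold mOp
  rw [covVec2_change Γ Γhat φ σ hrel i j k, htr i, htr j]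
  by_cases hik : i = k <;> by_cases hjk : j = k <;>
    simp only [hik, hjk, if_true, if_false, ite_true, ite_false] <;>
    · try simp only [hA]
      try field_simp
      try ring

lemma inv_symm {n : ℕ} {A : Matrix (Fin n) (Fin n) ℝ} (h : ∀ a b, A a b = A b a) :
    ∀ a b, A⁻¹ a b = A⁻¹ b a := by
  intro a b
  have hT : A.transpose = A := Matrix.ext fun x y => h y x
  have h1 : (A⁻¹).transpose = A⁻¹ := by rw [Matrix.transpose_nonsing_inv, hT]
  calc A⁻¹ a b = (A⁻¹).transpose b a := rfl
    _ = A⁻¹ b a := by rw [h1]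

theorem forward_dir {n : ℕ} (U : Set (Fin n → ℝ)) (hU : IsOpen U) (Γ : Christoffel n)
    (g : (Fin n → ℝ) → Matrix (Fin n) (Fin n) ℝ) (hg : MetricOn U g)
    (hpc : ∃ φ : (Fin n → ℝ) → Fin n → ℝ, ProjChange Γ (LeviCivita g) φ U) :
    ∀ p ∈ U, ∀ i j k, mOp Γ (sigmaOf g) p i j k = 0 := by
  obtain ⟨hsm_g, hsymU, hdetU⟩ := hg
  obtain ⟨φ, hφ⟩ := hpc
  intro p hp i j k
  have hdat : ∀ a b, DifferentiableAt ℝ (fun q => g q a b) p := fun a b =>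
    ((hsm_g a b).contDiffAt (hU.mem_nhds hp)).differentiableAt (by simp)
  have hdet : (g p).det ≠ 0 := hdetU p hp
  have hcont : ContinuousAt (fun q => (g q).det) p := (differentiableAt_det hdat).continuousAt
  have hsymm_ev : ∀ a b, (fun q => g q a b) =ᶠ[nhds p] (fun q => g q b a) := fun a b =>
    Filter.eventuallyEq_of_mem (hU.mem_nhds hp) (fun q hq => hsymU q hq a b)
  have hsym : ∀ a b, g p a b = g p b a := hsymU p hp
  have hGi := inv_symm (A := g p) hsym
  have hσ : ∀ a b, sigmaOf g p a b = sigmaOf g p b a := by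
    intro a b; unfold sigmaOf; rw [hGi a b]
  have hrel := hφ p hp
  rw [← mOp_projchange Γ (LeviCivita g) φ (sigmaOf g) hσ hrel i j k]
  unfold mOp
  simp [covVec2_LC_sigma_zero g hdat hcont hdet hsymm_ev hsym]


variable {n : ℕ} {p : Fin n → ℝ} {M : (Fin n → ℝ) → Matrix (Fin n) (Fin n) ℝ}

lemma contDiffAt_finset_prod {ι : Type*} [DecidableEq ι] (s : Finset ι)
    (F : ι → (Fin n → ℝ) → ℝ) (h : ∀ i ∈ s, ContDiffAt ℝ ∞ (F i) p) :
    ContDiffAt ℝ ∞ (fun q => ∏ i ∈ s, F i q) p := by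
  classical
  induction s using Finset.induction_on with
  | empty => simpa using contDiffAt_const
  | insert a s' hx ih =>
    simp only [Finset.prod_insert hx]
    exact (h a (Finset.mem_insert_self a s')).mul
      (ih fun i hi => h i (Finset.mem_insert_of_mem hi))

lemma contDiffAt_finset_sum {ι : Type*} [DecidableEq ι] (s : Finset ι)
    (F : ι → (Fin n → ℝ) → ℝ) (h : ∀ i ∈ s, ContDiffAt ℝ ∞ (F i) p) :
    ContDiffAt ℝ ∞ (fun q => ∑ i ∈ s, F i q) p := by
  classical
  induction s using Finset.induction_on with
  | empty => simpa using contDiffAt_const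
  | insert a s' hx ih =>
    simp only [Finset.sum_insert hx]
    exact (h a (Finset.mem_insert_self a s')).add
      (ih fun i hi => h i (Finset.mem_insert_of_mem hi))

lemma contDiffAt_det' (h : ∀ a b, ContDiffAt ℝ ∞ (fun q => M q a b) p) :
    ContDiffAt ℝ ∞ (fun q => (M q).det) p := by
  rw [det_fun_eq]
  refine contDiffAt_finset_sum _ _ fun σ _ => ContDiffAt.mul contDiffAt_const ?_
  exact contDiffAt_finset_prod _ _ fun c _ => h (σ c) c

lemma contDiffAt_adjugate_entry (h : ∀ a b, ContDiffAt ℝ ∞ (fun q => M q a b) p)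
    (i j : Fin n) : ContDiffAt ℝ ∞ (fun q => (M q).adjugate i j) p := by
  have he : (fun q => (M q).adjugate i j)
      = fun q => ((M q).updateRow j (Pi.single i 1)).det := by
    funext q; rw [Matrix.adjugate_apply]
  rw [he]
  refine contDiffAt_det' fun a b => ?_
  by_cases haj : a = j
  · simpa [Matrix.updateRow_apply, haj] using contDiffAt_const
  · simpa [Matrix.updateRow_apply, haj] using h a b

lemma contDiffAt_inv_entry (h : ∀ a b, ContDiffAt ℝ ∞ (fun q => M q a b) p)
    (hdet : (M p).det ≠ 0) (i j : Fin n) :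
    ContDiffAt ℝ ∞ (fun q => (M q)⁻¹ i j) p := by
  have he : (fun q => (M q)⁻¹ i j) = fun q => ((M q).det)⁻¹ * (M q).adjugate i j := by
    funext q; exact inv_entry_eq _ _ _
  rw [he]
  exact ((contDiffAt_det' h).inv hdet).mul (contDiffAt_adjugate_entry h i j)


theorem backward_dir {n : ℕ} (hn : 2 ≤ n) (U : Set (Fin n → ℝ)) (hU : IsOpen U)
    (Γ : Christoffel n) (hTF : TorsionFree Γ)
    (σ : (Fin n → ℝ) → Fin n → Fin n → ℝ)
    (hsmσ : ∀ i j, ContDiffOn ℝ ∞ (fun p => σ p i j) U)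
    (hsymσ : ∀ p ∈ U, ∀ i j, σ p i j = σ p j i)
    (hdetσ : ∀ p ∈ U, (Matrix.of fun i j => σ p i j).det ≠ 0)
    (hmop : ∀ p ∈ U, ∀ i j k, mOp Γ σ p i j k = 0) :
    ∃ g : (Fin n → ℝ) → Matrix (Fin n) (Fin n) ℝ, MetricOn U g ∧
      (∃ φ : (Fin n → ℝ) → Fin n → ℝ, ProjChange Γ (LeviCivita g) φ U) ∧
      ∀ p ∈ U, ∀ i j, σ p i j = sigmaOf g p i j := by
  classical
  set τ : (Fin n → ℝ) → Matrix (Fin n) (Fin n) ℝ :=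
    fun q => Matrix.of fun i j => σ q i j with hτdef
  set e : (Fin n → ℝ) → ℝ := fun q => |(τ q).det| with hedef
  set M : (Fin n → ℝ) → Matrix (Fin n) (Fin n) ℝ := fun q => e q • τ q with hMdef
  set g : (Fin n → ℝ) → Matrix (Fin n) (Fin n) ℝ := fun q => (M q)⁻¹ with hgdef
  have hc : ((n : ℝ) + 1) ≠ 0 := by positivity
  -- pointwise facts
  have hτcd : ∀ p ∈ U, ∀ a b, ContDiffAt ℝ ∞ (fun q => τ q a b) p := fun p hp a b =>
    (hsmσ a b).contDiffAt (hU.mem_nhds hp)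
  have hτdet : ∀ p ∈ U, (τ p).det ≠ 0 := fun p hp => hdetσ p hp
  have hdetτcd : ∀ p ∈ U, ContDiffAt ℝ ∞ (fun q => (τ q).det) p := fun p hp =>
    contDiffAt_det' (hτcd p hp)
  have hecd : ∀ p ∈ U, ContDiffAt ℝ ∞ e p := fun p hp =>
    by have := (contDiffAt_abs (hτdet p hp)).comp p (hdetτcd p hp); exact this
  have hepos : ∀ p ∈ U, 0 < e p := fun p hp => abs_pos.mpr (hτdet p hp)
  have hMcd : ∀ p ∈ U, ∀ a b, ContDiffAt ℝ ∞ (fun q => M q a b) p := by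
    intro p hp a b
    have : (fun q => M q a b) = fun q => e q * σ q a b := rfl
    rw [this]
    exact (hecd p hp).mul ((hsmσ a b).contDiffAt (hU.mem_nhds hp))
  have hMdetval : ∀ p, (M p).det = (e p) ^ n * (τ p).det := by
    intro p
    rw [hMdef]
    simp [Matrix.det_smul]
  have hMdet : ∀ p ∈ U, (M p).det ≠ 0 := by
    intro p hp
    rw [hMdetval]
    exact mul_ne_zero (pow_ne_zero _ (hepos p hp).ne') (hτdet p hp)
  have hMunit : ∀ p ∈ U, IsUnit (M p).det := fun p hp => isUnit_iff_ne_zero.mpr (hMdet p hp)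
  have hgcd : ∀ p ∈ U, ∀ a b, ContDiffAt ℝ ∞ (fun q => g q a b) p := fun p hp a b =>
    contDiffAt_inv_entry (hMcd p hp) (hMdet p hp) a b
  have hτsym : ∀ p ∈ U, ∀ a b, τ p a b = τ p b a := fun p hp a b => hsymσ p hp a b
  have hMsym : ∀ p ∈ U, ∀ a b, M p a b = M p b a := by
    intro p hp a b
    show e p * τ p a b = e p * τ p b a
    rw [hτsym p hp a b]
  have hgsym : ∀ p ∈ U, ∀ a b, g p a b = g p b a := fun p hp =>
    inv_symm (hMsym p hp)
  have hginv : ∀ p ∈ U, (g p)⁻¹ = M p := fun p hp =>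
    Matrix.nonsing_inv_nonsing_inv _ (hMunit p hp)
  have hgdet : ∀ p ∈ U, (g p).det ≠ 0 := by
    intro p hp
    rw [hgdef]
    simp only [Matrix.det_nonsing_inv, Ring.inverse_eq_inv]
    exact inv_ne_zero (hMdet p hp)
  have hMet : MetricOn U g :=
    ⟨fun i j => (hU.contDiffOn_iff).mpr fun p hp => hgcd p hp i j,
     fun p hp i j => hgsym p hp i j, hgdet⟩
  -- sigmaOf g = σ on U
  have hsig : ∀ p ∈ U, ∀ i j, σ p i j = sigmaOf g p i j := by
    intro p hp i j
    have hpow : |(g p).det| ^ (1 / ((n:ℝ) + 1)) = (e p)⁻¹ := by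
      have h1 : (g p).det = ((M p).det)⁻¹ := by
        rw [hgdef]; simp [Matrix.det_nonsing_inv, Ring.inverse_eq_inv]
      have h2 : |(g p).det| = ((e p) ^ (n+1))⁻¹ := by
        rw [h1, abs_inv, hMdetval, abs_mul, abs_pow, abs_abs]
        rw [hedef]
        ring_nf
      rw [h2, ← Real.rpow_natCast (e p) (n+1), ← Real.rpow_neg (hepos p hp).le,
        ← Real.rpow_mul (hepos p hp).le]
      rw [show ((-((n+1):ℕ):ℝ) * (1 / ((n:ℝ)+1))) = -1 by push_cast; field_simp]
      exact Real.rpow_neg_one _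
    show σ p i j = (g p)⁻¹ i j * _
    rw [hginv p hp, hpow]
    show σ p i j = (e p * σ p i j) * (e p)⁻¹
    field_simp [(hepos p hp).ne']
  refine ⟨g, hMet, ?_, hsig⟩
  set μ : (Fin n → ℝ) → Fin n → ℝ := fun q x => ∑ s, covVec2 2 Γ σ q x s s with hμdef
  set φ : (Fin n → ℝ) → Fin n → ℝ :=
    fun q s => -(1/((n:ℝ)+1)) * ∑ a, (τ q)⁻¹ s a * μ q a with hφdef
  refine ⟨φ, ?_⟩
  intro p hp i j k
  set Γh : Christoffel n := fun q a b c => Γ q a b c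
    + (if a = b then φ q c else 0) + (if a = c then φ q b else 0) with hΓhdef
  show LeviCivita g p i j k = Γh p i j k
  set ρ : Matrix (Fin n) (Fin n) ℝ := (τ p)⁻¹ with hρdef
  have hτunit : IsUnit (τ p).det := isUnit_iff_ne_zero.mpr (hτdet p hp)
  have hρsym : ∀ a b, ρ a b = ρ b a := inv_symm (hτsym p hp)
  have hδ1 : ∀ s x, (∑ b, τ p s b * ρ b x) = if s = x then (1:ℝ) else 0 := by
    intro s x
    have : (τ p * ρ) s x = (1 : Matrix (Fin n) (Fin n) ℝ) s x := by
      rw [hρdef, Matrix.mul_nonsing_inv _ hτunit]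
    simpa [Matrix.mul_apply, Matrix.one_apply] using this
  have hδ2 : ∀ a x, (∑ s, ρ a s * τ p s x) = if a = x then (1:ℝ) else 0 := by
    intro a x
    have : (ρ * τ p) a x = (1 : Matrix (Fin n) (Fin n) ℝ) a x := by
      rw [hρdef, Matrix.nonsing_inv_mul _ hτunit]
    simpa [Matrix.mul_apply, Matrix.one_apply] using this
  have hσsymp : ∀ a b, σ p a b = σ p b a := hsymσ p hp
  have hAφ : ∀ x, (∑ s, φ p s * σ p s x) = -(1/((n:ℝ)+1)) * μ p x := by
    intro x
    have step1 : (∑ s, φ p s * σ p s x)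
        = ∑ s, ∑ a, (-(1/((n:ℝ)+1))) * (ρ s a * μ p a * σ p s x) := by
      refine Finset.sum_congr rfl fun s _ => ?_
      show (-(1/((n:ℝ)+1)) * ∑ a, ρ s a * μ p a) * σ p s x = _
      have hh : ∀ (S v : ℝ), (-(1/((n:ℝ)+1)) * S) * v = S * (-(1/((n:ℝ)+1)) * v) := by
        intros; ring
      rw [hh, Finset.sum_mul]
      refine Finset.sum_congr rfl fun a _ => by ring
    rw [step1, Finset.sum_comm]
    have step2 : ∀ a, (∑ s, (-(1/((n:ℝ)+1))) * (ρ s a * μ p a * σ p s x))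
        = (-(1/((n:ℝ)+1))) * μ p a * (if a = x then (1:ℝ) else 0) := by
      intro a
      calc (∑ s, (-(1/((n:ℝ)+1))) * (ρ s a * μ p a * σ p s x))
          = ∑ s, (-(1/((n:ℝ)+1)) * μ p a) * (ρ a s * τ p s x) := by
            refine Finset.sum_congr rfl fun s _ => ?_
            rw [hρsym s a]
            show -(1/((n:ℝ)+1)) * (ρ a s * μ p a * σ p s x)
              = -(1/((n:ℝ)+1)) * μ p a * (ρ a s * σ p s x)
            ring
        _ = (-(1/((n:ℝ)+1)) * μ p a) * ∑ s, ρ a s * τ p s x := (Finset.mul_sum _ _ _).symm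
        _ = (-(1/((n:ℝ)+1))) * μ p a * (if a = x then (1:ℝ) else 0) := by rw [hδ2 a x]
    simp only [step2, mul_ite, mul_one, mul_zero]
    rw [Finset.sum_ite_eq' Finset.univ x]
    simp
  have hcov : ∀ a b m, covVec2 2 Γ σ p a b m
      = (1/((n:ℝ)+1)) * ((μ p a) * (if b = m then (1:ℝ) else 0)
        + (μ p b) * (if a = m then (1:ℝ) else 0)) := by
    intro a b m
    have h0 := hmop p hp a b m
    unfold mOp at h0
    rw [hμdef]
    linarith [h0]
  have hcovh : ∀ a b m, covVec2 2 Γh σ p a b m = 0 := by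
    intro a b m
    rw [covVec2_change Γ Γh φ σ (fun _ _ _ => rfl) a b m, hcov a b m]
    have h2 : (∑ s, φ p s * σ p a s) = ∑ s, φ p s * σ p s a :=
      Finset.sum_congr rfl fun s _ => by rw [hσsymp a s]
    rw [h2, hAφ b, hAφ a]
    by_cases hab : a = m <;> by_cases hbm : b = m <;> simp [hab, hbm] <;> ring
  have hTFh : ∀ x u v, Γh p x u v = Γh p x v u := by
    intro x u v
    show Γ p x u v + _ + _ = Γ p x v u + _ + _
    rw [hTF p x u v]
    ring
  have hτdat : ∀ a b, DifferentiableAt ℝ (fun q => τ q a b) p := fun a b =>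
    (hτcd p hp a b).differentiableAt (by simp)
  have hMdat : ∀ a b, DifferentiableAt ℝ (fun q => M q a b) p := fun a b =>
    (hMcd p hp a b).differentiableAt (by simp)
  have hedat : DifferentiableAt ℝ e p :=
    (hecd p hp).differentiableAt (by simp)
  have hdetMcont : ContinuousAt (fun q => (M q).det) p :=
    (differentiableAt_det hMdat).continuousAt
  set That : Fin n → ℝ := fun m => ∑ s, Γh p s s m with hThatdef
  set R : Fin n → ℝ := fun m => ∑ a, ∑ b, ρ b a * pd m (fun q => σ q a b) p with hRdef
  have hadjτ : ∀ a b, (τ p).adjugate a b = (τ p).det * ρ a b := by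
    intro a b
    rw [hρdef, inv_entry_eq, ← mul_assoc, mul_inv_cancel₀ (hτdet p hp), one_mul]
  have hpddetτ : ∀ m, pd m (fun q => (τ q).det) p = (τ p).det * R m := by
    intro m
    rw [pd_det hτdat m, hRdef, Finset.mul_sum]
    refine Finset.sum_congr rfl fun a _ => ?_
    rw [Finset.mul_sum]
    refine Finset.sum_congr rfl fun b _ => ?_
    have hfn : (fun q => τ q a b) = fun q => σ q a b := rfl
    rw [hfn, hadjτ]
    ring
  have hR : ∀ m, R m = -2 * (1/((n:ℝ)+1)) * That m := by
    intro m
    have hzero : (∑ a, ∑ b, ρ b a * covVec2 2 Γh σ p a b m) = 0 := by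
      simp [hcovh]
    have hexpand : ∀ a b : Fin n, covVec2 2 Γh σ p a b m
        = pd m (fun q => σ q a b) p + (∑ s, Γh p a s m * σ p s b)
          + (∑ s, Γh p b s m * σ p a s) - (2/((n:ℝ)+1)) * That m * σ p a b := fun a b => rfl
    have hP2 : (∑ a, ∑ b, ρ b a * ∑ s, Γh p a s m * σ p s b) = That m := by
      have inner : ∀ a, (∑ b, ρ b a * ∑ s, Γh p a s m * σ p s b) = Γh p a a m := by
        intro a
        have e1 : (∑ b, ρ b a * ∑ s, Γh p a s m * σ p s b)
            = ∑ b, ∑ s, Γh p a s m * (τ p s b * ρ b a) := by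
          refine Finset.sum_congr rfl fun b _ => ?_
          rw [Finset.mul_sum]
          exact Finset.sum_congr rfl fun s _ => by
            show ρ b a * (Γh p a s m * σ p s b) = Γh p a s m * (σ p s b * ρ b a); ring
        rw [e1, Finset.sum_comm]
        have e2 : ∀ s, (∑ b, Γh p a s m * (τ p s b * ρ b a))
            = Γh p a s m * (if s = a then (1:ℝ) else 0) := by
          intro s
          rw [← Finset.mul_sum, hδ1 s a]
        simp only [e2, mul_ite, mul_one, mul_zero]
        rw [Finset.sum_ite_eq' Finset.univ a]
        simp only [Finset.mem_univ, if_true]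
      simp only [inner]
      rfl
    have hP3 : (∑ a, ∑ b, ρ b a * ∑ s, Γh p b s m * σ p a s) = That m := by
      rw [Finset.sum_comm]
      have inner : ∀ b, (∑ a, ρ b a * ∑ s, Γh p b s m * σ p a s) = Γh p b b m := by
        intro b
        have e1 : (∑ a, ρ b a * ∑ s, Γh p b s m * σ p a s)
            = ∑ a, ∑ s, Γh p b s m * (ρ b a * τ p a s) := by
          refine Finset.sum_congr rfl fun a _ => ?_
          rw [Finset.mul_sum]
          exact Finset.sum_congr rfl fun s _ => by
            show ρ b a * (Γh p b s m * σ p a s) = Γh p b s m * (ρ b a * σ p a s); ring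
        rw [e1, Finset.sum_comm]
        have e2 : ∀ s, (∑ a, Γh p b s m * (ρ b a * τ p a s))
            = Γh p b s m * (if b = s then (1:ℝ) else 0) := by
          intro s
          rw [← Finset.mul_sum, hδ2 b s]
        simp only [e2, mul_ite, mul_one, mul_zero]
        rw [Finset.sum_ite_eq Finset.univ b]
        simp only [Finset.mem_univ, if_true]
      simp only [inner]
      rfl
    have hN : (∑ a, ∑ b, ρ b a * σ p a b) = (n:ℝ) := by
      rw [Finset.sum_comm]
      have inner : ∀ b, (∑ a, ρ b a * σ p a b) = 1 := by
        intro b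
        have := hδ2 b b
        simp only [if_pos rfl] at this
        exact this
      simp [inner]
    have hsplit : (∑ a, ∑ b, ρ b a * covVec2 2 Γh σ p a b m)
        = R m + (∑ a, ∑ b, ρ b a * ∑ s, Γh p a s m * σ p s b)
          + (∑ a, ∑ b, ρ b a * ∑ s, Γh p b s m * σ p a s)
          - (2/((n:ℝ)+1)) * That m * (∑ a, ∑ b, ρ b a * σ p a b) := by
      rw [hRdef]
      simp only [hexpand, mul_add, mul_sub, Finset.sum_add_distrib, Finset.sum_sub_distrib]
      congr 1
      simp only [Finset.mul_sum]
      refine Finset.sum_congr rfl fun a _ => Finset.sum_congr rfl fun b _ => by ring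
    rw [hsplit, hP2, hP3, hN] at hzero
    have hc2 : ((n:ℝ)+1) ≠ 0 := hc
    field_simp at hzero ⊢
    linarith [hzero]
  -- derivative of e
  have habs : HasDerivAt (fun y : ℝ => |y|) (|(τ p).det| / (τ p).det) ((τ p).det) := by
    have h := hasDerivAt_abs_rpow (hτdet p hp) 1
    simp only [Real.rpow_one, one_mul] at h
    exact h
  have hpde : ∀ m, pd m e p = e p * R m := by
    intro m
    have : pd m e p = (|(τ p).det| / (τ p).det) * pd m (fun q => (τ q).det) p :=
      pd_comp habs (differentiableAt_det hτdat)
    rw [this, hpddetτ m]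
    field_simp [hτdet p hp]
    ring
  have hpdσ_eq : ∀ x y m, pd m (fun q => σ q x y) p
      = -(∑ s, Γh p x s m * σ p s y) - (∑ s, Γh p y s m * σ p x s)
        + (2/((n:ℝ)+1)) * That m * σ p x y := by
    intro x y m
    have h0 := hcovh x y m
    have hexp : covVec2 2 Γh σ p x y m
        = pd m (fun q => σ q x y) p + (∑ s, Γh p x s m * σ p s y)
          + (∑ s, Γh p y s m * σ p x s) - (2/((n:ℝ)+1)) * That m * σ p x y := rfl
    rw [hexp] at h0
    linarith [h0]
  have hpdM : ∀ m x y, pd m (fun q => M q x y) p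
      = -(∑ s, Γh p x s m * M p s y) - (∑ s, Γh p y s m * M p x s) := by
    intro m x y
    have hfn : (fun q => M q x y) = fun q => e q * σ q x y := rfl
    have hfac1 : (∑ s, Γh p x s m * M p s y) = e p * ∑ s, Γh p x s m * σ p s y := by
      rw [Finset.mul_sum]
      refine Finset.sum_congr rfl fun s _ => ?_
      show Γh p x s m * (e p * σ p s y) = _
      ring
    have hfac2 : (∑ s, Γh p y s m * M p x s) = e p * ∑ s, Γh p y s m * σ p x s := by
      rw [Finset.mul_sum]
      refine Finset.sum_congr rfl fun s _ => ?_
      show Γh p y s m * (e p * σ p x s) = _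
      ring
    rw [hfn, pd_mul hedat (((hsmσ x y).contDiffAt (hU.mem_nhds hp)).differentiableAt
      (by simp)), hpde m, hpdσ_eq x y m, hfac1, hfac2]
    linear_combination (σ p x y * e p) * hR m
  have hδM1 : ∀ s b, (∑ y, M p s y * g p y b) = if s = b then (1:ℝ) else 0 := by
    intro s b
    have : (M p * g p) s b = (1 : Matrix (Fin n) (Fin n) ℝ) s b := by
      rw [hgdef, Matrix.mul_nonsing_inv _ (hMunit p hp)]
    simpa [Matrix.mul_apply, Matrix.one_apply] using this
  have hδM2 : ∀ a s, (∑ x, g p a x * M p x s) = if a = s then (1:ℝ) else 0 := by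
    intro a s
    have : (g p * M p) a s = (1 : Matrix (Fin n) (Fin n) ℝ) a s := by
      rw [hgdef, Matrix.nonsing_inv_mul _ (hMunit p hp)]
    simpa [Matrix.mul_apply, Matrix.one_apply] using this
  have hpdg : ∀ m a b, pd m (fun q => g q a b) p
      = (∑ x, Γh p x b m * g p a x) + (∑ x, Γh p x a m * g p x b) := by
    intro m a b
    have h0 := pd_inv_entry (M := M) hMdat hdetMcont (hMdet p hp) a b m
    have hgM : (fun q => g q a b) = fun q => (M q)⁻¹ a b := rfl
    have hMg : (M p)⁻¹ = g p := rfl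
    calc pd m (fun q => g q a b) p
        = -∑ x, ∑ y, (M p)⁻¹ a x * pd m (fun q => M q x y) p * (M p)⁻¹ y b := by
          rw [hgM, h0]
      _ = ∑ x, ∑ y, ((∑ s, Γh p x s m * (g p a x * (M p s y * g p y b)))
            + (∑ s, Γh p y s m * (g p y b * (g p a x * M p x s)))) := by
          rw [neg_eq_iff_eq_neg, ← Finset.sum_neg_distrib]
          refine Finset.sum_congr rfl fun x _ => ?_
          rw [← Finset.sum_neg_distrib]
          refine Finset.sum_congr rfl fun y _ => ?_
          rw [hMg, hpdM m x y]
          have h2 : g p a x * (∑ s, Γh p x s m * M p s y) * g p y b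
              = ∑ s, Γh p x s m * (g p a x * (M p s y * g p y b)) := by
            rw [Finset.mul_sum, Finset.sum_mul]
            exact Finset.sum_congr rfl fun s _ => by ring
          have h3 : g p a x * (∑ s, Γh p y s m * M p x s) * g p y b
              = ∑ s, Γh p y s m * (g p y b * (g p a x * M p x s)) := by
            rw [Finset.mul_sum, Finset.sum_mul]
            exact Finset.sum_congr rfl fun s _ => by ring
          linear_combination -h2 - h3
      _ = (∑ x, Γh p x b m * g p a x) + (∑ x, Γh p x a m * g p x b) := by
          simp only [Finset.sum_add_distrib]
          congr 1
          · refine Finset.sum_congr rfl fun x _ => ?_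
            rw [Finset.sum_comm]
            have e1 : ∀ s, (∑ y, Γh p x s m * (g p a x * (M p s y * g p y b)))
                = Γh p x s m * g p a x * (if s = b then (1:ℝ) else 0) := by
              intro s
              rw [← hδM1 s b, Finset.mul_sum]
              exact Finset.sum_congr rfl fun y _ => by ring
            simp only [e1, mul_ite, mul_one, mul_zero]
            rw [Finset.sum_ite_eq' Finset.univ b]
            simp only [Finset.mem_univ, if_true]
          · rw [Finset.sum_comm]
            refine Finset.sum_congr rfl fun y _ => ?_
            rw [Finset.sum_comm]
            have e2 : ∀ s, (∑ x, Γh p y s m * (g p y b * (g p a x * M p x s)))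
                = Γh p y s m * g p y b * (if a = s then (1:ℝ) else 0) := by
              intro s
              rw [← hδM2 a s, Finset.mul_sum]
              exact Finset.sum_congr rfl fun x _ => by ring
            simp only [e2, mul_ite, mul_one, mul_zero]
            rw [Finset.sum_ite_eq Finset.univ a]
            simp only [Finset.mem_univ, if_true]
  -- final assembly
  have hbracket : ∀ s, pd j (fun q => g q s k) p + pd k (fun q => g q s j) p
      - pd s (fun q => g q j k) p = 2 * ∑ x, Γh p x j k * g p s x := by
    intro s
    rw [hpdg j s k, hpdg k s j, hpdg s j k]
    have c1 : (∑ x, Γh p x k j * g p s x) = ∑ x, Γh p x j k * g p s x :=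
      Finset.sum_congr rfl fun x _ => by rw [hTFh x k j]
    have c2 : (∑ x, Γh p x s j * g p x k) = ∑ x, Γh p x j s * g p x k :=
      Finset.sum_congr rfl fun x _ => by rw [hTFh x s j]
    have c3 : (∑ x, Γh p x k s * g p j x) = ∑ x, Γh p x s k * g p x j :=
      Finset.sum_congr rfl fun x _ => by rw [hTFh x k s, hgsym p hp j x]
    rw [c1, c2, c3]
    ring
  calc LeviCivita g p i j k
      = 1/2 * ∑ s, (g p)⁻¹ i s * (pd j (fun q => g q s k) p + pd k (fun q => g q s j) p
          - pd s (fun q => g q j k) p) := rfl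
    _ = ∑ s, M p i s * (∑ x, Γh p x j k * g p s x) := by
        rw [Finset.mul_sum]
        refine Finset.sum_congr rfl fun s _ => ?_
        rw [hbracket s, hginv p hp]
        ring
    _ = ∑ x, Γh p x j k * (∑ s, M p i s * g p s x) := by
        have e1 : ∀ s, M p i s * (∑ x, Γh p x j k * g p s x)
            = ∑ x, Γh p x j k * (M p i s * g p s x) := by
          intro s
          rw [Finset.mul_sum]
          exact Finset.sum_congr rfl fun x _ => by ring
        simp only [e1]
        rw [Finset.sum_comm]
        exact Finset.sum_congr rfl fun x _ => (Finset.mul_sum _ _ _).symm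
    _ = ∑ x, Γh p x j k * (if i = x then (1:ℝ) else 0) := by
        exact Finset.sum_congr rfl fun x _ => by rw [hδM1 i x]
    _ = Γh p i j k := by
        simp only [mul_ite, mul_one, mul_zero]
        rw [Finset.sum_ite_eq Finset.univ i]
        simp only [Finset.mem_univ, if_true]

/-- **Eastwood–Matveev.** Let `[∇]` be the projective class of a torsion-free
connection `Γ` on `U ⊆ ℝⁿ` (`n ≥ 2`).  (⇒) If the Levi-Civita connection of a
pseudo-Riemannian metric `g` lies in `[∇]`, then `σ^{ij} := g^{ij} ⊗ (Vol_g)^{2/(n+1)}`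
solves the metrisability equation (the trace-free part of `∇σ` vanishes).  (⇐) Conversely,
every nondegenerate solution `σ` of the metrisability equation arises in this way from a
pseudo-Riemannian metric whose Levi-Civita connection lies in `[∇]`. -/
theorem statement_7 {n : ℕ} (hn : 2 ≤ n) (U : Set (Fin n → ℝ)) (hU : IsOpen U)
    (Γ : Christoffel n) (hTF : TorsionFree Γ) (hsm : SmoothChristoffelOn U Γ) :
    (∀ g : (Fin n → ℝ) → Matrix (Fin n) (Fin n) ℝ, MetricOn U g →
      (∃ φ : (Fin n → ℝ) → Fin n → ℝ, ProjChange Γ (LeviCivita g) φ U) →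
      ∀ p ∈ U, ∀ i j k, mOp Γ (sigmaOf g) p i j k = 0) ∧
    (∀ σ : (Fin n → ℝ) → Fin n → Fin n → ℝ,
      (∀ i j, ContDiffOn ℝ ∞ (fun p => σ p i j) U) →
      (∀ p ∈ U, ∀ i j, σ p i j = σ p j i) →
      (∀ p ∈ U, (Matrix.of fun i j => σ p i j).det ≠ 0) →
      (∀ p ∈ U, ∀ i j k, mOp Γ σ p i j k = 0) →
      ∃ g : (Fin n → ℝ) → Matrix (Fin n) (Fin n) ℝ, MetricOn U g ∧
        (∃ φ : (Fin n → ℝ) → Fin n → ℝ, ProjChange Γ (LeviCivita g) φ U) ∧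
        ∀ p ∈ U, ∀ i j, σ p i j = sigmaOf g p i j) := by
  constructor
  · intro g hg hpc
    exact forward_dir U hU Γ g hg hpc
  · intro σ hsm' hsym hdet hm
    exact backward_dir hn U hU Γ hTF σ hsm' hsym hdet hm

end ProjGeo
end
end
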